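/- Let M = (L, μ0, Σ, δ) be an MDP. There exists a strategy α such that M with strategy α is strongly synchronizing (i.e., liminf_{n→∞} ‖X_n^α‖ = 1) if and only if the perfect-information subset construction M^P for M has an accessible cycle C such that C has exactly one minimal recurrent cyclic set G (|Δ(C)| = 1), and every element g of G is a singleton (|g| = 1 for all g ∈ G). -/

import Mathlib

open Filter

namespace SyncMDP

/-- A history: an initial state followed by a list of (action, state) steps. -/
structure Hist (L A : Type) where
  start : L
  steps : List (A × L)
deriving DecidableEq

variable {L A : Type}

/-- The last state of a history. -/
def Hist.last (h : Hist L A) : L := h.steps.foldl (fun _ p => p.2) h.start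

/-- The length of a history. -/
def Hist.len (h : Hist L A) : ℕ := h.steps.length

/-- Extending a history by one action and one state. -/
def Hist.extend (h : Hist L A) (a : A) (l : L) : Hist L A := ⟨h.start, h.steps ++ [(a, l)]⟩

/-- A probability distribution on a finite type. -/
def IsDist {S : Type} [Fintype S] (d : S → ℝ) : Prop :=
  (∀ s, 0 ≤ d s) ∧ ∑ s, d s = 1

/-- A probabilistic transition function. -/
def IsTrans [Fintype L] (δ : L → A → L → ℝ) : Prop := ∀ l a, IsDist (δ l a)

/-- A (randomized) strategy assigns a distribution over actions to every history. -/
def IsStrategy [Fintype A] (α : Hist L A → A → ℝ) : Prop :=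
  ∀ h : Hist L A, (∀ a, 0 ≤ α h a) ∧ ∑ a, α h a = 1

/-- A pure strategy plays one action with probability one after every history. -/
def PureStrat (α : Hist L A → A → ℝ) : Prop := ∀ h, ∃ a, α h a = 1

/-- A blind strategy only depends on the length of the history. -/
def BlindStrat (α : Hist L A → A → ℝ) : Prop :=
  ∀ h₁ h₂ : Hist L A, h₁.len = h₂.len → α h₁ = α h₂

/-- A memoryless strategy only depends on the last state of the history. -/
def Memoryless (α : Hist L A → A → ℝ) : Prop :=
  ∀ h₁ h₂ : Hist L A, h₁.last = h₂.last → α h₁ = α h₂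

/-- Auxiliary product for the probability of a history: the first argument is the current
state, the second the history (prefix) read so far, the third the remaining steps. -/
def prAux (δ : L → A → L → ℝ) (α : Hist L A → A → ℝ) : L → Hist L A → List (A × L) → ℝ
  | _, _, [] => 1
  | cur, pre, (a, l) :: rest => α pre a * δ cur a l * prAux δ α l (pre.extend a l) rest

/-- The probability `Pr^α(h)` of a history `h`. -/
def pr (μ0 : L → ℝ) (δ : L → A → L → ℝ) (α : Hist L A → A → ℝ) (h : Hist L A) : ℝ :=
  μ0 h.start * prAux δ α h.start ⟨h.start, []⟩ h.steps

variable (L A) in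
/-- The finite set of all histories of length `n`. -/
def hists [Fintype L] [DecidableEq L] [Fintype A] [DecidableEq A] : ℕ → Finset (Hist L A)
  | 0 => Finset.univ.image fun l : L => ⟨l, []⟩
  | n + 1 => (hists n).biUnion fun h => Finset.univ.image fun p : A × L => h.extend p.1 p.2

variable [Fintype L] [DecidableEq L] [Fintype A] [DecidableEq A]

/-- The outcome `X_n^α` : the distribution over states at step `n` under strategy `α`. -/
noncomputable def outcome (μ0 : L → ℝ) (δ : L → A → L → ℝ) (α : Hist L A → A → ℝ)
    (n : ℕ) (l : L) : ℝ :=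
  ∑ h ∈ (hists L A n).filter (fun h => h.last = l), pr μ0 δ α h

/-- The norm `‖X‖ = max_{ℓ ∈ L} X(ℓ)` of a distribution on a (nonempty) finite type. -/
noncomputable def dnorm (X : L → ℝ) : ℝ := ⨆ l, X l

/-- Strongly synchronizing: `liminf_n ‖X_n^α‖ = 1`. -/
def StronglySync (μ0 : L → ℝ) (δ : L → A → L → ℝ) (α : Hist L A → A → ℝ) : Prop :=
  liminf (fun n => dnorm (outcome μ0 δ α n)) atTop = 1

/-- Weakly synchronizing: `limsup_n ‖X_n^α‖ = 1`. -/
def WeaklySync (μ0 : L → ℝ) (δ : L → A → L → ℝ) (α : Hist L A → A → ℝ) : Prop :=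
  limsup (fun n => dnorm (outcome μ0 δ α n)) atTop = 1

open Classical in
/-- `Post_σ(ℓ)`: the support of `δ(ℓ,σ)`. -/
noncomputable def post (δ : L → A → L → ℝ) (l : L) (a : A) : Finset L :=
  Finset.univ.filter fun l' => 0 < δ l a l'

/-- Transition function of the perfect-information subset construction. -/
noncomputable def deltaP (δ : L → A → L → ℝ) (s : Finset L) (f : L → A) : Finset L :=
  s.biUnion fun l => post δ l (f l)

/-- Transition function of the blind subset construction. -/
noncomputable def deltaB (δ : L → A → L → ℝ) (s : Finset L) (a : A) : Finset L :=
  s.biUnion fun l => post δ l a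

open Classical in
/-- The initial cell: the support of `μ0`. -/
noncomputable def initCell (μ0 : L → ℝ) : Finset L :=
  Finset.univ.filter fun l => 0 < μ0 l

/-- Reachability of a cell from the initial cell in the perfect-information
subset construction. -/
def ReachP (μ0 : L → ℝ) (δ : L → A → L → ℝ) (s : Finset L) : Prop :=
  Relation.ReflTransGen (fun t t' => ∃ f : L → A, deltaP δ t f = t') (initCell μ0) s

/-- Reachability of a cell from the initial cell in the blind subset construction. -/
def ReachB (μ0 : L → ℝ) (δ : L → A → L → ℝ) (s : Finset L) : Prop :=
  Relation.ReflTransGen (fun t t' => ∃ a : A, deltaB δ t a = t') (initCell μ0) s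

/-- Cyclic successor on `Fin d`. -/
def cyc {d : ℕ} (hd : 0 < d) (i : Fin d) : Fin d := ⟨((i : ℕ) + 1) % d, Nat.mod_lt _ hd⟩

/-- A recurrent cyclic set for the cycle `(s, act)` of length `d` of the
perfect-information subset construction. -/
def IsRCSP {d : ℕ} (hd : 0 < d) (δ : L → A → L → ℝ) (s : Fin d → Finset L)
    (act : Fin d → L → A) (g : Fin d → Finset L) : Prop :=
  ∀ i : Fin d, (g i).Nonempty ∧ g i ⊆ s i ∧
    (g i).biUnion (fun l => post δ l (act i l)) = g (cyc hd i)

/-- A minimal recurrent cyclic set (perfect-information). -/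
def IsMinRCSP {d : ℕ} (hd : 0 < d) (δ : L → A → L → ℝ) (s : Fin d → Finset L)
    (act : Fin d → L → A) (g : Fin d → Finset L) : Prop :=
  IsRCSP hd δ s act g ∧
    ∀ g' : Fin d → Finset L, IsRCSP hd δ s act g' → (∀ i, g' i ⊆ g i) → g' = g

/-- A recurrent cyclic set for the cycle `(s, act)` of length `d` of the blind
subset construction. -/
def IsRCSB {d : ℕ} (hd : 0 < d) (δ : L → A → L → ℝ) (s : Fin d → Finset L)
    (act : Fin d → A) (g : Fin d → Finset L) : Prop :=
  ∀ i : Fin d, (g i).Nonempty ∧ g i ⊆ s i ∧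
    (g i).biUnion (fun l => post δ l (act i)) = g (cyc hd i)

/-- A minimal recurrent cyclic set (blind). -/
def IsMinRCSB {d : ℕ} (hd : 0 < d) (δ : L → A → L → ℝ) (s : Fin d → Finset L)
    (act : Fin d → A) (g : Fin d → Finset L) : Prop :=
  IsRCSB hd δ s act g ∧
    ∀ g' : Fin d → Finset L, IsRCSB hd δ s act g' → (∀ i, g' i ⊆ g i) → g' = g


set_option linter.unusedSectionVars false
set_option maxHeartbeats 1000000

section Basics
variable {L A : Type} [Fintype L] [DecidableEq L] [Fintype A] [DecidableEq A]

@[simp] lemma Hist.last_extend (h : Hist L A) (a : A) (l : L) : (h.extend a l).last = l := by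
  simp [Hist.extend, Hist.last]

@[simp] lemma Hist.len_extend (h : Hist L A) (a : A) (l : L) : (h.extend a l).len = h.len + 1 := by
  simp [Hist.extend, Hist.len]

lemma mem_hists {n : ℕ} {h : Hist L A} : h ∈ hists L A n ↔ h.len = n := by
  induction n generalizing h with
  | zero =>
    simp only [hists, Finset.mem_image, Finset.mem_univ, true_and]
    constructor
    · rintro ⟨l, rfl⟩; rfl
    · intro hl
      refine ⟨h.start, ?_⟩
      have : h.steps = [] := List.length_eq_zero_iff.mp hl
      cases h; simp_all
  | succ n ih =>
    simp only [hists, Finset.mem_biUnion, Finset.mem_image, Finset.mem_univ, true_and]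
    constructor
    · rintro ⟨h', hh', p, rfl⟩
      simp [Hist.len_extend, ih.mp hh']
    · intro hl
      rcases List.eq_nil_or_concat h.steps with hnil | ⟨st, p, hst⟩
      · simp [Hist.len, hnil] at hl
      · refine ⟨⟨h.start, st⟩, ih.mpr ?_, p, ?_⟩
        · have := hl
          simp only [Hist.len, hst, List.concat_eq_append, List.length_append,
            List.length_cons, List.length_nil] at this ⊢
          omega
        · cases h; simp_all [Hist.extend, List.concat_eq_append]

lemma prAux_nonneg {δ : L → A → L → ℝ} {α : Hist L A → A → ℝ}
    (hδ : ∀ l a l', 0 ≤ δ l a l') (hα : ∀ h a, 0 ≤ α h a) :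
    ∀ (xs : List (A × L)) (cur : L) (pre : Hist L A), 0 ≤ prAux δ α cur pre xs
  | [], _, _ => by simp [prAux]
  | (a, l) :: rest, cur, pre => by
    have := prAux_nonneg hδ hα rest l (pre.extend a l)
    simpa [prAux] using mul_nonneg (mul_nonneg (hα pre a) (hδ cur a l)) this

lemma pr_nonneg {μ0 : L → ℝ} {δ : L → A → L → ℝ} {α : Hist L A → A → ℝ}
    (hμ0 : ∀ l, 0 ≤ μ0 l) (hδ : ∀ l a l', 0 ≤ δ l a l') (hα : ∀ h a, 0 ≤ α h a)
    (h : Hist L A) : 0 ≤ pr μ0 δ α h :=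
  mul_nonneg (hμ0 _) (prAux_nonneg hδ hα _ _ _)

lemma prAux_concat (δ : L → A → L → ℝ) (α : Hist L A → A → ℝ) (a : A) (l : L) :
    ∀ (xs : List (A × L)) (cur : L) (pre : Hist L A),
      prAux δ α cur pre (xs ++ [(a, l)]) =
        prAux δ α cur pre xs * α ⟨pre.start, pre.steps ++ xs⟩ a *
          δ (xs.foldl (fun _ p => p.2) cur) a l
  | [], cur, pre => by
    simp only [List.nil_append, prAux, List.foldl_nil, List.append_nil, mul_one, one_mul]
  | (b, m) :: rest, cur, pre => by
    have ih := prAux_concat δ α a l rest m (pre.extend b m)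
    simp only [List.cons_append, prAux, List.foldl_cons, List.append_eq]
    rw [ih]
    simp only [Hist.extend, List.append_assoc, List.singleton_append]
    ring

lemma pr_extend (μ0 : L → ℝ) (δ : L → A → L → ℝ) (α : Hist L A → A → ℝ)
    (h : Hist L A) (a : A) (l : L) :
    pr μ0 δ α (h.extend a l) = pr μ0 δ α h * α h a * δ h.last a l := by
  cases h with
  | mk st steps =>
    simp only [pr, Hist.extend, Hist.last, prAux_concat, List.nil_append]
    ring

end Basics

section Sums
variable {L A : Type} [Fintype L] [DecidableEq L] [Fintype A] [DecidableEq A]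
variable {μ0 : L → ℝ} {δ : L → A → L → ℝ} {α : Hist L A → A → ℝ}

lemma extend_inj {h h' : Hist L A} {p p' : A × L}
    (he : h.extend p.1 p.2 = h'.extend p'.1 p'.2) : h = h' ∧ p = p' := by
  cases h with
  | mk st steps =>
    cases h' with
    | mk st' steps' =>
      simp only [Hist.extend, Hist.mk.injEq] at he
      obtain ⟨h1, h2⟩ := he
      have h3 := congrArg List.reverse h2
      simp only [List.reverse_append, List.reverse_cons, List.reverse_nil, List.nil_append,
        List.singleton_append, List.cons.injEq] at h3
      obtain ⟨hp, hs⟩ := h3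
      have : steps = steps' := by
        have := congrArg List.reverse hs; simpa using this
      refine ⟨by simp [h1, this], ?_⟩
      cases p; cases p'; simpa using hp

lemma sum_hists_succ (n : ℕ) (F : Hist L A → ℝ) :
    ∑ h ∈ hists L A (n + 1), F h = ∑ h ∈ hists L A n, ∑ p : A × L, F (h.extend p.1 p.2) := by
  show ∑ h ∈ (hists L A n).biUnion _, F h = _
  rw [Finset.sum_biUnion]
  · refine Finset.sum_congr rfl fun h hh => ?_
    rw [Finset.sum_image]
    intro p _ p' _ he
    exact (extend_inj he).2
  · intro h1 h1m h2 h2m hne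
    simp only [Function.onFun]
    rw [Finset.disjoint_left]
    intro x hx1 hx2
    simp only [Finset.mem_image, Finset.mem_univ, true_and] at hx1 hx2
    obtain ⟨p1, rfl⟩ := hx1
    obtain ⟨p2, he⟩ := hx2
    exact hne (extend_inj he.symm).1

lemma outcome_zero (l : L) : outcome μ0 δ α 0 l = μ0 l := by
  unfold outcome
  rw [Finset.sum_filter]
  show ∑ h ∈ Finset.univ.image (fun l : L => (⟨l, []⟩ : Hist L A)), _ = _
  rw [Finset.sum_image (by intro a _ b _ hab; injection hab)]
  simp [Hist.last, pr, prAux]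

lemma outcome_succ (n : ℕ) (y : L) :
    outcome μ0 δ α (n + 1) y =
      ∑ h ∈ hists L A n, ∑ a, pr μ0 δ α h * α h a * δ h.last a y := by
  unfold outcome
  rw [Finset.sum_filter, sum_hists_succ]
  refine Finset.sum_congr rfl fun h hh => ?_
  rw [Fintype.sum_prod_type]
  refine Finset.sum_congr rfl fun a _ => ?_
  simp [Hist.last_extend, pr_extend]

lemma len_eq_of_mem_hists {n : ℕ} {h : Hist L A} (hh : h ∈ hists L A n) : h.len = n :=
  mem_hists.mp hh

variable (hμ0 : IsDist μ0) (hδ : IsTrans δ) (hα : IsStrategy α)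
include hμ0 hδ hα

lemma outcome_nonneg (n : ℕ) (l : L) : 0 ≤ outcome μ0 δ α n l :=
  Finset.sum_nonneg fun h _ => pr_nonneg hμ0.1 (fun l a => (hδ l a).1) (fun h a => (hα h).1 a) h

lemma sum_pr_hists (n : ℕ) : ∑ h ∈ hists L A n, pr μ0 δ α h = 1 := by
  induction n with
  | zero =>
    show ∑ h ∈ Finset.univ.image (fun l : L => (⟨l, []⟩ : Hist L A)), _ = _
    rw [Finset.sum_image (by intro a _ b _ hab; injection hab)]
    simpa [pr, prAux] using hμ0.2
  | succ n ih =>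
    rw [sum_hists_succ]
    rw [← ih]
    refine Finset.sum_congr rfl fun h hh => ?_
    rw [Fintype.sum_prod_type]
    have : ∀ a : A, ∑ l : L, pr μ0 δ α (h.extend a l) = pr μ0 δ α h * α h a := by
      intro a
      simp only [pr_extend]
      rw [← Finset.mul_sum, (hδ h.last a).2, mul_one]
    simp only [this]
    rw [← Finset.mul_sum, (hα h).2, mul_one]

lemma sum_outcome (n : ℕ) : ∑ l, outcome μ0 δ α n l = 1 := by
  unfold outcome
  rw [Finset.sum_fiberwise_of_maps_to (fun x _ => Finset.mem_univ (Hist.last x))]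
  exact sum_pr_hists hμ0 hδ hα n

lemma outcome_le_one (n : ℕ) (l : L) : outcome μ0 δ α n l ≤ 1 := by
  have h1 := sum_outcome hμ0 hδ hα n
  calc outcome μ0 δ α n l ≤ ∑ l', outcome μ0 δ α n l' :=
        Finset.single_le_sum (fun l' _ => outcome_nonneg hμ0 hδ hα n l') (Finset.mem_univ l)
    _ = 1 := h1

end Sums

section Wgt
variable {L A : Type} [Fintype L] [DecidableEq L] [Fintype A] [DecidableEq A]

/-- Aggregated weight of action `a` at state `x` at time `n`. -/
noncomputable def wgt (μ0 : L → ℝ) (δ : L → A → L → ℝ) (α : Hist L A → A → ℝ)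
    (n : ℕ) (x : L) (a : A) : ℝ :=
  ∑ h ∈ (hists L A n).filter (fun h => h.last = x), pr μ0 δ α h * α h a

variable {μ0 : L → ℝ} {δ : L → A → L → ℝ} {α : Hist L A → A → ℝ}

lemma outcome_succ_wgt (n : ℕ) (y : L) :
    outcome μ0 δ α (n + 1) y = ∑ x, ∑ a, wgt μ0 δ α n x a * δ x a y := by
  rw [outcome_succ,
    ← Finset.sum_fiberwise_of_maps_to (fun h _ => Finset.mem_univ (Hist.last h))
      (fun h => ∑ a, pr μ0 δ α h * α h a * δ h.last a y)]
  refine Finset.sum_congr rfl fun x _ => ?_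
  have hcg : ∀ h ∈ (hists L A n).filter (fun h => h.last = x),
      (∑ a, pr μ0 δ α h * α h a * δ h.last a y) = ∑ a, pr μ0 δ α h * α h a * δ x a y := by
    intro h hh
    rw [(Finset.mem_filter.mp hh).2]
  rw [Finset.sum_congr rfl hcg, Finset.sum_comm]
  refine Finset.sum_congr rfl fun a _ => ?_
  simp only [wgt]
  rw [← Finset.sum_mul]

variable (hμ0 : IsDist μ0) (hδ : IsTrans δ) (hα : IsStrategy α)
include hμ0 hδ hα

lemma wgt_nonneg (n : ℕ) (x : L) (a : A) : 0 ≤ wgt μ0 δ α n x a :=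
  Finset.sum_nonneg fun h _ => mul_nonneg
    (pr_nonneg hμ0.1 (fun l a => (hδ l a).1) (fun h a => (hα h).1 a) h) ((hα h).1 a)

lemma sum_wgt (n : ℕ) (x : L) : ∑ a, wgt μ0 δ α n x a = outcome μ0 δ α n x := by
  unfold wgt outcome
  rw [Finset.sum_comm]
  refine Finset.sum_congr rfl fun h _ => ?_
  rw [← Finset.mul_sum, (hα h).2, mul_one]

lemma wgt_le_outcome (n : ℕ) (x : L) (a : A) : wgt μ0 δ α n x a ≤ outcome μ0 δ α n x := by
  rw [← sum_wgt hμ0 hδ hα n x]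
  exact Finset.single_le_sum (fun a' _ => wgt_nonneg hμ0 hδ hα n x a') (Finset.mem_univ a)

lemma exists_wgt_pos {n : ℕ} {x : L} (hx : 0 < outcome μ0 δ α n x) :
    ∃ a, 0 < wgt μ0 δ α n x a := by
  by_contra hc
  push_neg at hc
  have : ∑ a, wgt μ0 δ α n x a = 0 :=
    le_antisymm (Finset.sum_nonpos fun a _ => hc a)
      (Finset.sum_nonneg fun a _ => wgt_nonneg hμ0 hδ hα n x a)
  rw [sum_wgt hμ0 hδ hα] at this
  exact absurd this (ne_of_gt hx)

lemma outcome_succ_ge (n : ℕ) (x y : L) (a : A) :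
    wgt μ0 δ α n x a * δ x a y ≤ outcome μ0 δ α (n + 1) y := by
  rw [outcome_succ_wgt]
  have h1 : ∀ x', 0 ≤ ∑ a', wgt μ0 δ α n x' a' * δ x' a' y :=
    fun x' => Finset.sum_nonneg fun a' _ =>
      mul_nonneg (wgt_nonneg hμ0 hδ hα n x' a') ((hδ x' a').1 y)
  calc wgt μ0 δ α n x a * δ x a y
      ≤ ∑ a', wgt μ0 δ α n x a' * δ x a' y :=
        Finset.single_le_sum (fun a' _ => mul_nonneg (wgt_nonneg hμ0 hδ hα n x a')
          ((hδ x a').1 y)) (Finset.mem_univ a)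
    _ ≤ ∑ x', ∑ a', wgt μ0 δ α n x' a' * δ x' a' y :=
        Finset.single_le_sum (fun x' _ => h1 x') (Finset.mem_univ x)

lemma outcome_succ_pos {n : ℕ} {x y : L} {a : A}
    (hw : 0 < wgt μ0 δ α n x a) (hd : 0 < δ x a y) : 0 < outcome μ0 δ α (n + 1) y :=
  lt_of_lt_of_le (mul_pos hw hd) (outcome_succ_ge hμ0 hδ hα n x y a)

end Wgt

section Pure
variable {L A : Type} [Fintype L] [DecidableEq L] [Fintype A] [DecidableEq A]

/-- The pure time/state strategy induced by `F`. -/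
def pureOf (F : ℕ → L → A) : Hist L A → A → ℝ :=
  fun h a => if F h.len h.last = a then 1 else 0

lemma isStrategy_pureOf (F : ℕ → L → A) : IsStrategy (pureOf F : Hist L A → A → ℝ) := by
  intro h
  constructor
  · intro a; unfold pureOf; split <;> norm_num
  · simp [pureOf]

variable {μ0 : L → ℝ} {δ : L → A → L → ℝ}

lemma wgt_pureOf (F : ℕ → L → A) (n : ℕ) (x : L) (a : A) :
    wgt μ0 δ (pureOf F) n x a
      = if F n x = a then outcome μ0 δ (pureOf F) n x else 0 := by
  unfold wgt outcome
  have hcg : ∀ h ∈ (hists L A n).filter (fun h => h.last = x),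
      pr μ0 δ (pureOf F) h * pureOf F h a
        = (if F n x = a then (1:ℝ) else 0) * pr μ0 δ (pureOf F) h := by
    intro h hh
    obtain ⟨h1, h2⟩ := Finset.mem_filter.mp hh
    unfold pureOf
    rw [len_eq_of_mem_hists h1, h2]
    ring
  rw [Finset.sum_congr rfl hcg, ← Finset.mul_sum]
  split <;> simp

lemma outcome_pure_succ (F : ℕ → L → A) (n : ℕ) (y : L) :
    outcome μ0 δ (pureOf F) (n + 1) y
      = ∑ x, outcome μ0 δ (pureOf F) n x * δ x (F n x) y := by
  rw [outcome_succ_wgt]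
  refine Finset.sum_congr rfl fun x _ => ?_
  simp [wgt_pureOf, ite_mul, Finset.sum_ite_eq]

/-- `t`-step transition probabilities starting at time `n` under pure strategy `F`. -/
noncomputable def kstep (δ : L → A → L → ℝ) (F : ℕ → L → A) : ℕ → ℕ → L → L → ℝ
  | _, 0, x, y => if x = y then 1 else 0
  | n, t+1, x, y => ∑ z, δ x (F n x) z * kstep δ F (n+1) t z y

lemma kstep_nonneg (hδ : IsTrans δ) (F : ℕ → L → A) :
    ∀ (t n : ℕ) (x y : L), 0 ≤ kstep δ F n t x y
  | 0, n, x, y => by unfold kstep; split <;> norm_num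
  | t+1, n, x, y => by
    unfold kstep
    exact Finset.sum_nonneg fun z _ =>
      mul_nonneg ((hδ x (F n x)).1 z) (kstep_nonneg hδ F t (n+1) z y)

lemma kstep_ge_step (hδ : IsTrans δ) (F : ℕ → L → A) (n t : ℕ) (x z y : L) :
    δ x (F n x) z * kstep δ F (n+1) t z y ≤ kstep δ F n (t+1) x y := by
  show _ ≤ ∑ z, _
  exact Finset.single_le_sum (fun w _ =>
    mul_nonneg ((hδ x (F n x)).1 w) (kstep_nonneg hδ F t (n+1) w y)) (Finset.mem_univ z)

lemma outcome_kstep (F : ℕ → L → A) (t : ℕ) :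
    ∀ (n : ℕ) (y : L), outcome μ0 δ (pureOf F) (n + t) y
      = ∑ x, outcome μ0 δ (pureOf F) n x * kstep δ F n t x y := by
  induction t with
  | zero =>
    intro n y
    simp [kstep, Finset.sum_ite_eq, mul_ite]
  | succ t ih =>
    intro n y
    have hn : n + (t + 1) = (n + 1) + t := by omega
    rw [hn, ih (n+1) y]
    have hz : ∀ z : L, outcome μ0 δ (pureOf F) (n+1) z * kstep δ F (n+1) t z y
        = ∑ x, outcome μ0 δ (pureOf F) n x * (δ x (F n x) z * kstep δ F (n+1) t z y) := by
      intro z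
      rw [outcome_pure_succ F n z, Finset.sum_mul]
      exact Finset.sum_congr rfl fun x _ => by ring
    rw [Finset.sum_congr rfl (fun z _ => hz z), Finset.sum_comm]
    refine Finset.sum_congr rfl fun x _ => ?_
    rw [← Finset.mul_sum]
    rfl

end Pure

section Misc
variable {L A : Type} [Fintype L] [DecidableEq L] [Fintype A] [DecidableEq A]

lemma nonempty_of_isDist {μ0 : L → ℝ} (hμ0 : IsDist μ0) : Nonempty L := by
  by_contra h
  have : IsEmpty L := not_nonempty_iff.mp h
  have h2 := hμ0.2
  rw [Finset.univ_eq_empty, Finset.sum_empty] at h2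
  norm_num at h2

lemma le_dnorm [Nonempty L] (X : L → ℝ) (l : L) : X l ≤ dnorm X :=
  le_ciSup (Set.Finite.bddAbove (Set.finite_range X)) l

lemma dnorm_le [Nonempty L] (X : L → ℝ) (c : ℝ) (h : ∀ l, X l ≤ c) : dnorm X ≤ c :=
  ciSup_le h

lemma dnorm_eq_max [Nonempty L] (X : L → ℝ) : ∃ l, dnorm X = X l := by
  obtain ⟨l, -, hl⟩ := Finset.exists_max_image Finset.univ X
    ⟨Classical.arbitrary L, Finset.mem_univ _⟩
  exact ⟨l, le_antisymm (ciSup_le fun y => hl y (Finset.mem_univ y)) (le_dnorm X l)⟩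

lemma exists_pmin {δ : L → A → L → ℝ} (hδ : IsTrans δ) :
    ∃ p : ℝ, 0 < p ∧ p ≤ 1 ∧ ∀ l a l', 0 < δ l a l' → p ≤ δ l a l' := by
  classical
  set T : Finset (L × A × L) :=
    Finset.univ.filter (fun z => 0 < δ z.1 z.2.1 z.2.2) with hTdef
  by_cases hT : T.Nonempty
  · set p0 := T.inf' hT (fun z => δ z.1 z.2.1 z.2.2) with hp0
    refine ⟨min p0 1, ?_, min_le_right _ _, ?_⟩
    · have h0 : 0 < p0 := by
        rw [hp0, Finset.lt_inf'_iff]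
        intro z hz
        exact (Finset.mem_filter.mp hz).2
      exact lt_min h0 one_pos
    · intro l a l' hpos
      have hz : (⟨l, a, l'⟩ : L × A × L) ∈ T := by
        simp only [hTdef, Finset.mem_filter, Finset.mem_univ, true_and]; exact hpos
      exact le_trans (min_le_left _ _) (Finset.inf'_le _ hz)
  · refine ⟨1, one_pos, le_refl 1, fun l a l' hpos => ?_⟩
    have hz : (⟨l, a, l'⟩ : L × A × L) ∈ T := by
      simp only [hTdef, Finset.mem_filter, Finset.mem_univ, true_and]; exact hpos
    exact absurd ⟨⟨l, a, l'⟩, hz⟩ hT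

lemma mem_post {δ : L → A → L → ℝ} {l l' : L} {a : A} :
    l' ∈ post δ l a ↔ 0 < δ l a l' := by
  simp [post]

lemma delta_eq_zero_of_not_mem_post {δ : L → A → L → ℝ} (hδ : IsTrans δ) {l l' : L} {a : A}
    (h : l' ∉ post δ l a) : δ l a l' = 0 :=
  le_antisymm (not_lt.mp (fun hc => h (mem_post.mpr hc))) ((hδ l a).1 l')

lemma post_nonempty {δ : L → A → L → ℝ} (hδ : IsTrans δ) (l : L) (a : A) :
    (post δ l a).Nonempty := by
  by_contra hc
  rw [Finset.not_nonempty_iff_eq_empty] at hc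
  have : ∑ l', δ l a l' = 0 := by
    refine Finset.sum_eq_zero fun l' _ => ?_
    refine delta_eq_zero_of_not_mem_post hδ ?_
    simp [hc]
  rw [(hδ l a).2] at this
  norm_num at this

lemma delta_eq_one_of_post_singleton {δ : L → A → L → ℝ} (hδ : IsTrans δ) {l y : L} {a : A}
    (h : post δ l a = {y}) : δ l a y = 1 := by
  have h2 := (hδ l a).2
  rw [← h2]
  symm
  refine Finset.sum_eq_single y (fun b _ hb => ?_) (fun hy => absurd (Finset.mem_univ y) hy)
  refine delta_eq_zero_of_not_mem_post hδ ?_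
  rw [h]
  simp [hb]

lemma mem_deltaP {δ : L → A → L → ℝ} {s : Finset L} {f : L → A} {y : L} :
    y ∈ deltaP δ s f ↔ ∃ l ∈ s, y ∈ post δ l (f l) := by
  simp [deltaP]

/-- Phase function for computing modulo `d`. -/
def phase {d : ℕ} (hd : 0 < d) (k : ℕ) : Fin d := ⟨k % d, Nat.mod_lt _ hd⟩

lemma phase_succ {d : ℕ} (hd : 0 < d) (k : ℕ) :
    phase hd (k + 1) = cyc hd (phase hd k) := by
  simp [phase, cyc, Nat.mod_add_mod]

lemma phase_fin {d : ℕ} (hd : 0 < d) (i : Fin d) : phase hd i.val = i := by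
  simp [phase, Nat.mod_eq_of_lt i.isLt]

lemma phase_add_right {d : ℕ} (hd : 0 < d) (k : ℕ) : phase hd (k + d) = phase hd k := by
  simp [phase, Nat.add_mod_right]

lemma phase_surj {d : ℕ} (hd : 0 < d) (i j : Fin d) :
    ∃ k, phase hd (i.val + k) = j := by
  refine ⟨d + j.val - i.val, ?_⟩
  have hle : i.val ≤ d + j.val := le_trans (le_of_lt i.isLt) (Nat.le_add_right _ _)
  have : i.val + (d + j.val - i.val) = d + j.val := by omega
  rw [this]
  simp [phase, Nat.add_mod_left, Nat.mod_eq_of_lt j.isLt]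

end Misc

section Comb
variable {L A : Type} [Fintype L] [DecidableEq L] [Fintype A] [DecidableEq A]

/-- A closed family of cells along the cycle. -/
def ClosedCyc {d : ℕ} (hd : 0 < d) (δ : L → A → L → ℝ) (s : Fin d → Finset L)
    (act : Fin d → L → A) (C : Fin d → Finset L) : Prop :=
  (∀ j, C j ⊆ s j) ∧
    ∀ j, (C j).biUnion (fun l => post δ l (act j l)) ⊆ C (cyc hd j)

lemma isRCSP_closed {d : ℕ} {hd : 0 < d} {δ : L → A → L → ℝ} {s : Fin d → Finset L}
    {act : Fin d → L → A} {g : Fin d → Finset L} (hg : IsRCSP hd δ s act g) :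
    ClosedCyc hd δ s act g :=
  ⟨fun j => (hg j).2.1, fun j => le_of_eq (hg j).2.2⟩

lemma cyc_phase_add {d : ℕ} (hd : 0 < d) (n : ℕ) :
    cyc hd (phase hd n) = phase hd (n + 1) := (phase_succ hd n).symm

lemma closed_nonempty_all {d : ℕ} {hd : 0 < d} {δ : L → A → L → ℝ} {s : Fin d → Finset L}
    {act : Fin d → L → A} {C : Fin d → Finset L} (hδ : IsTrans δ)
    (hC : ClosedCyc hd δ s act C) {j0 : Fin d} (hne : (C j0).Nonempty) :
    ∀ j, (C j).Nonempty := by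
  have key : ∀ k, (C (phase hd (j0.val + k))).Nonempty := by
    intro k
    induction k with
    | zero => rw [Nat.add_zero, phase_fin]; exact hne
    | succ k ih =>
      obtain ⟨y, hy⟩ := ih
      obtain ⟨z, hz⟩ := post_nonempty hδ y (act (phase hd (j0.val + k)) y)
      have : z ∈ C (cyc hd (phase hd (j0.val + k))) := by
        refine hC.2 _ ?_
        exact Finset.mem_biUnion.mpr ⟨y, hy, hz⟩
      rw [cyc_phase_add, Nat.add_assoc] at this
      exact ⟨z, this⟩
  intro j
  obtain ⟨k, hk⟩ := phase_surj hd j0 j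
  rw [← hk]; exact key k

/-- The "previous" index along the cycle. -/
def prevC {d : ℕ} (hd : 0 < d) (j : Fin d) : Fin d := phase hd (j.val + (d - 1))

lemma cyc_prevC {d : ℕ} (hd : 0 < d) (j : Fin d) : cyc hd (prevC hd j) = j := by
  rw [prevC, cyc_phase_add]
  have : j.val + (d - 1) + 1 = j.val + d := by omega
  rw [this]
  rw [phase_add_right, phase_fin]

lemma prevC_cyc {d : ℕ} (hd : 0 < d) (j : Fin d) : prevC hd (cyc hd j) = j := by
  unfold prevC cyc
  apply Fin.ext
  show ((j.val + 1) % d + (d - 1)) % d = j.val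
  rw [Nat.mod_add_mod]
  have : j.val + 1 + (d - 1) = j.val + d := by omega
  rw [this, Nat.add_mod_right, Nat.mod_eq_of_lt j.isLt]

lemma exists_minRCS {d : ℕ} {hd : 0 < d} {δ : L → A → L → ℝ} {s : Fin d → Finset L}
    {act : Fin d → L → A} (hδ : IsTrans δ) :
    ∀ (N : ℕ) (C : Fin d → Finset L), (∑ j, (C j).card) ≤ N →
      ClosedCyc hd δ s act C → (∃ j, (C j).Nonempty) →
      ∃ g, IsMinRCSP hd δ s act g ∧ ∀ j, g j ⊆ C j := by
  intro N
  induction N with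
  | zero =>
    intro C hcard hC hne
    obtain ⟨j0, hj0⟩ := hne
    have h1 : 1 ≤ (C j0).card := Finset.card_pos.mpr hj0
    have h2 : (C j0).card ≤ ∑ j, (C j).card :=
      Finset.single_le_sum (f := fun j => (C j).card) (fun j _ => Nat.zero_le _)
        (Finset.mem_univ j0)
    omega
  | succ N ih =>
    intro C hcard hC hne
    have hall : ∀ j, (C j).Nonempty := closed_nonempty_all hδ hC hne.choose_spec
    set C' : Fin d → Finset L :=
      fun j => (C (prevC hd j)).biUnion (fun l => post δ l (act (prevC hd j) l)) with hC'def
    have hsub : ∀ j, C' j ⊆ C j := by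
      intro j
      rw [hC'def]
      have := hC.2 (prevC hd j)
      rw [cyc_prevC] at this
      exact this
    have hC'closed : ClosedCyc hd δ s act C' := by
      constructor
      · intro j
        exact (hsub j).trans (hC.1 j)
      · intro j
        have himg : (C' j).biUnion (fun l => post δ l (act j l)) ⊆
            (C j).biUnion (fun l => post δ l (act j l)) :=
          Finset.biUnion_subset_biUnion_of_subset_left _ (hsub j)
        refine himg.trans ?_
        have : C' (cyc hd j) = (C j).biUnion (fun l => post δ l (act j l)) := by
          show (C (prevC hd (cyc hd j))).biUnion
              (fun l => post δ l (act (prevC hd (cyc hd j)) l)) = _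
          rw [prevC_cyc]
        rw [this]
    have hC'ne : ∃ j, (C' j).Nonempty := by
      refine ⟨cyc hd ⟨0, hd⟩, ?_⟩
      obtain ⟨y, hy⟩ := hall (prevC hd (cyc hd ⟨0, hd⟩))
      obtain ⟨z, hz⟩ := post_nonempty hδ y (act _ y)
      exact ⟨z, Finset.mem_biUnion.mpr ⟨y, hy, hz⟩⟩
    by_cases hCC : ∀ j, C' j = C j
    · -- C is itself an RCS
      have hRCS : IsRCSP hd δ s act C := by
        intro i
        refine ⟨hall i, hC.1 i, ?_⟩
        have : C' (cyc hd i) = (C i).biUnion (fun l => post δ l (act i l)) := by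
          show (C (prevC hd (cyc hd i))).biUnion
              (fun l => post δ l (act (prevC hd (cyc hd i)) l)) = _
          rw [prevC_cyc]
        rw [← this, hCC]
      by_cases hmin : ∀ g', IsRCSP hd δ s act g' → (∀ i, g' i ⊆ C i) → g' = C
      · exact ⟨C, ⟨hRCS, hmin⟩, fun j => subset_rfl⟩
      · push_neg at hmin
        obtain ⟨g', hg', hg'sub, hg'ne⟩ := hmin
        have hlt : ∑ j, (g' j).card < ∑ j, (C j).card := by
          have hne2 : ∃ j, g' j ≠ C j := by
            by_contra hcon
            push_neg at hcon
            exact hg'ne (funext hcon)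
          obtain ⟨j1, hj1⟩ := hne2
          refine Finset.sum_lt_sum (fun j _ => Finset.card_le_card (hg'sub j)) ⟨j1,
            Finset.mem_univ j1, Finset.card_lt_card (lt_of_le_of_ne (hg'sub j1) hj1)⟩
        obtain ⟨g, hgmin, hgsub⟩ := ih g' (by omega) (isRCSP_closed hg') ⟨⟨0, hd⟩, (hg' _).1⟩
        exact ⟨g, hgmin, fun j => (hgsub j).trans (hg'sub j)⟩
    · push_neg at hCC
      obtain ⟨j1, hj1⟩ := hCC
      have hlt : ∑ j, (C' j).card < ∑ j, (C j).card :=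
        Finset.sum_lt_sum (fun j _ => Finset.card_le_card (hsub j))
          ⟨j1, Finset.mem_univ j1, Finset.card_lt_card (lt_of_le_of_ne (hsub j1) hj1)⟩
      obtain ⟨g, hgmin, hgsub⟩ := ih C' (by omega) hC'closed hC'ne
      exact ⟨g, hgmin, fun j => (hgsub j).trans (hsub j)⟩

/-- `r`-step reachability following the cycle actions, starting at `x` in phase `i`. -/
def nreach {d : ℕ} (hd : 0 < d) (δ : L → A → L → ℝ) (act : Fin d → L → A)
    (i : Fin d) (x : L) : ℕ → L → Prop
  | 0, y => y = x
  | r + 1, y => ∃ z, nreach hd δ act i x r z ∧ y ∈ post δ z (act (phase hd (i.val + r)) z)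

lemma reach_line {d : ℕ} {hd : 0 < d} {δ : L → A → L → ℝ} {s : Fin d → Finset L}
    {act : Fin d → L → A} (hδ : IsTrans δ)
    (hcyc : ∀ i, deltaP δ (s i) (act i) = s (cyc hd i))
    {g : Fin d → Finset L} (hg : IsMinRCSP hd δ s act g)
    (huniq : ∀ g', IsMinRCSP hd δ s act g' → g' = g)
    {i : Fin d} {x : L} (hx : x ∈ s i) :
    ∃ r y, nreach hd δ act i x r y ∧ y ∈ g (phase hd (i.val + r)) := by
  classical
  set C : Fin d → Finset L := fun j =>
    (s j).filter (fun y => ∃ r, phase hd (i.val + r) = j ∧ nreach hd δ act i x r y) with hCdef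
  have hclosed : ClosedCyc hd δ s act C := by
    constructor
    · intro j; rw [hCdef]; exact Finset.filter_subset _ _
    · intro j y' hy'
      obtain ⟨y, hy, hpost⟩ := Finset.mem_biUnion.mp hy'
      rw [hCdef, Finset.mem_filter] at hy
      obtain ⟨hys, r, hph, hnr⟩ := hy
      rw [hCdef, Finset.mem_filter]
      constructor
      · have : y' ∈ deltaP δ (s j) (act j) := mem_deltaP.mpr ⟨y, hys, hpost⟩
        rw [hcyc j] at this
        exact this
      · refine ⟨r + 1, ?_, ?_⟩
        · rw [← Nat.add_assoc, ← cyc_phase_add, hph]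
        · exact ⟨y, hnr, by rw [hph]; exact hpost⟩
  have hne : ∃ j, (C j).Nonempty := by
    refine ⟨i, x, ?_⟩
    rw [hCdef, Finset.mem_filter]
    exact ⟨hx, 0, by rw [Nat.add_zero, phase_fin], rfl⟩
  obtain ⟨gm, hgm, hgmsub⟩ := exists_minRCS hδ (∑ j, (C j).card) C le_rfl hclosed hne
  have hgmg : gm = g := huniq gm hgm
  obtain ⟨y0, hy0⟩ := (hg.1 i).1
  have : y0 ∈ C i := hgmsub i (hgmg ▸ hy0)
  rw [hCdef, Finset.mem_filter] at this
  obtain ⟨-, r, hph, hnr⟩ := this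
  exact ⟨r, y0, hnr, by rw [hph]; exact hy0⟩

end Comb

section Sufficiency
variable {L A : Type} [Fintype L] [DecidableEq L] [Fintype A] [DecidableEq A]

lemma reachP_path [Nonempty A] {μ0 : L → ℝ} {δ : L → A → L → ℝ} {u : Finset L}
    (h : ReachP μ0 δ u) :
    ∃ (m : ℕ) (c : ℕ → Finset L) (fs : ℕ → L → A), c 0 = initCell μ0 ∧ c m = u ∧
      ∀ j, j < m → deltaP δ (c j) (fs j) = c (j + 1) := by
  induction h with
  | refl =>
    exact ⟨0, fun _ => initCell μ0, fun _ _ => Classical.arbitrary A, rfl, rfl, by omega⟩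
  | @tail b v hab hbc ih =>
    obtain ⟨m, c, fs, h0, hm, hstep⟩ := ih
    obtain ⟨f, hf⟩ := hbc
    refine ⟨m + 1, fun k => if k ≤ m then c k else v, fun j => if j = m then f else fs j,
      ?_, ?_, ?_⟩
    · simp only [Nat.zero_le, if_pos]; exact h0
    · simp [Nat.not_succ_le_self]
    · intro j hj
      by_cases hjm : j = m
      · subst hjm
        simp only [le_refl, if_pos, if_neg (Nat.not_succ_le_self j), Nat.lt_irrefl,
          if_pos (Nat.le_refl j)]
        rw [hm]
        exact hf
      · have hjm' : j < m := by omega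
        simp only [if_neg hjm, if_pos (Nat.le_of_lt hjm'), if_pos (Nat.succ_le_of_lt hjm')]
        exact hstep j hjm'

variable {μ0 : L → ℝ} {δ : L → A → L → ℝ}

lemma kstep_zero (F : ℕ → L → A) (n : ℕ) (x y : L) :
    kstep δ F n 0 x y = if x = y then 1 else 0 := rfl

lemma kstep_succ (F : ℕ → L → A) (n t : ℕ) (x y : L) :
    kstep δ F n (t + 1) x y = ∑ z, δ x (F n x) z * kstep δ F (n + 1) t z y := rfl

lemma kstep_back (hδ : IsTrans δ) (F : ℕ → L → A) :
    ∀ (t n : ℕ) (x z y : L), kstep δ F n t x z * δ z (F (n + t) z) y ≤ kstep δ F n (t + 1) x y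
  | 0, n, x, z, y => by
    rw [kstep_zero, kstep_succ]
    by_cases hxz : x = z
    · subst hxz
      rw [if_pos rfl, one_mul, Nat.add_zero]
      have hsum : ∑ w, δ x (F n x) w * kstep δ F (n+1) 0 w y = δ x (F n x) y := by
        simp [kstep_zero, mul_ite, Finset.sum_ite_eq']
      rw [hsum]
    · rw [if_neg hxz, zero_mul]
      exact Finset.sum_nonneg fun w _ =>
        mul_nonneg ((hδ x (F n x)).1 w) (kstep_nonneg hδ F 0 (n+1) w y)
  | t+1, n, x, z, y => by
    show (∑ w, δ x (F n x) w * kstep δ F (n+1) t w z) * δ z (F (n + (t+1)) z) y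
      ≤ ∑ w, δ x (F n x) w * kstep δ F (n+1) (t+1) w y
    rw [Finset.sum_mul]
    refine Finset.sum_le_sum fun w _ => ?_
    rw [mul_assoc]
    refine mul_le_mul_of_nonneg_left ?_ ((hδ x (F n x)).1 w)
    have hrec := kstep_back hδ F t (n+1) w z y
    have : (n+1) + t = n + (t+1) := by omega
    rw [this] at hrec
    exact hrec

lemma kstep_comp (hδ : IsTrans δ) (F : ℕ → L → A) :
    ∀ (t1 : ℕ) (t2 n : ℕ) (x z y : L),
      kstep δ F n t1 x z * kstep δ F (n + t1) t2 z y ≤ kstep δ F n (t1 + t2) x y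
  | 0, t2, n, x, z, y => by
    rw [kstep_zero]
    by_cases hxz : x = z
    · subst hxz
      rw [if_pos rfl, one_mul, Nat.add_zero, Nat.zero_add]
    · rw [if_neg hxz, zero_mul, Nat.zero_add]
      exact kstep_nonneg hδ F t2 n x y
  | t1+1, t2, n, x, z, y => by
    have hshape : t1 + 1 + t2 = (t1 + t2) + 1 := by omega
    rw [hshape]
    show (∑ w, δ x (F n x) w * kstep δ F (n+1) t1 w z) * kstep δ F (n + (t1+1)) t2 z y
      ≤ ∑ w, δ x (F n x) w * kstep δ F (n+1) (t1 + t2) w y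
    rw [Finset.sum_mul]
    refine Finset.sum_le_sum fun w _ => ?_
    rw [mul_assoc]
    refine mul_le_mul_of_nonneg_left ?_ ((hδ x (F n x)).1 w)
    have hrec := kstep_comp hδ F t1 t2 (n+1) w z y
    have : (n+1) + t1 = n + (t1+1) := by omega
    rw [this] at hrec
    exact hrec

theorem sufficiency (hμ0 : IsDist μ0) (hδ : IsTrans δ)
    {d : ℕ} (hd : 0 < d) (s : Fin d → Finset L) (act : Fin d → L → A)
    (hcyc : ∀ i, deltaP δ (s i) (act i) = s (cyc hd i))
    (hreach : ReachP μ0 δ (s ⟨0, hd⟩))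
    (g : Fin d → Finset L) (hg : IsMinRCSP hd δ s act g)
    (huniq : ∀ g', IsMinRCSP hd δ s act g' → g' = g)
    (hcard : ∀ i, (g i).card = 1) :
    ∃ α : Hist L A → A → ℝ, IsStrategy α ∧ StronglySync μ0 δ α := by
  classical
  haveI : Nonempty L := nonempty_of_isDist hμ0
  haveI : Nonempty A := ⟨act ⟨0, hd⟩ (Classical.arbitrary L)⟩
  -- the singleton cycle
  have hsing : ∀ i, ∃ y, g i = {y} := fun i => Finset.card_eq_one.mp (hcard i)
  set ℓ : Fin d → L := fun i => (hsing i).choose with hℓdef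
  have hgl : ∀ i, g i = {ℓ i} := fun i => (hsing i).choose_spec
  have hlg : ∀ i, ℓ i ∈ g i := fun i => by rw [hgl i]; exact Finset.mem_singleton_self _
  have hls : ∀ i, ℓ i ∈ s i := fun i => (hg.1 i).2.1 (hlg i)
  have hpost : ∀ i, post δ (ℓ i) (act i (ℓ i)) = {ℓ (cyc hd i)} := by
    intro i
    have h1 := (hg.1 i).2.2
    rw [hgl i, hgl (cyc hd i)] at h1
    rw [← h1, Finset.singleton_biUnion]
  have hdirac : ∀ i, δ (ℓ i) (act i (ℓ i)) (ℓ (cyc hd i)) = 1 := fun i =>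
    delta_eq_one_of_post_singleton hδ (hpost i)
  -- the reaching path
  obtain ⟨m, c, fs, hc0, hcm, hcstep⟩ := reachP_path hreach
  -- minimal transition probability
  obtain ⟨p, hp0, hp1, hpmin⟩ := exists_pmin (δ := δ) hδ
  -- reach numbers
  have hreachnum : ∀ i (x : L), x ∈ s i →
      ∃ r, nreach hd δ act i x r (ℓ (phase hd (i.val + r))) := by
    intro i x hx
    obtain ⟨r, y, hnr, hy⟩ := reach_line hδ hcyc hg huniq hx
    rw [hgl, Finset.mem_singleton] at hy
    exact ⟨r, by rw [← hy]; exact hnr⟩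
  set R : Fin d → L → ℕ := fun i x => if h : x ∈ s i then (hreachnum i x h).choose else 0
    with hRdef
  have hR : ∀ i (x : L), x ∈ s i → nreach hd δ act i x (R i x) (ℓ (phase hd (i.val + R i x))) := by
    intro i x hx
    have : R i x = (hreachnum i x hx).choose := by rw [hRdef]; simp [hx]
    rw [this]
    exact (hreachnum i x hx).choose_spec
  set T : ℕ := 1 + ∑ i : Fin d, ∑ x : L, R i x with hTdef
  have hT1 : 1 ≤ T := Nat.le_add_right 1 _
  have hRT : ∀ i (x : L), R i x ≤ T := by
    intro i x
    have h1 : R i x ≤ ∑ x : L, R i x :=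
      Finset.single_le_sum (f := fun x => R i x) (fun _ _ => Nat.zero_le _) (Finset.mem_univ x)
    have h2 : (∑ x : L, R i x) ≤ ∑ i : Fin d, ∑ x : L, R i x :=
      Finset.single_le_sum (f := fun i => ∑ x : L, R i x) (fun _ _ => Nat.zero_le _)
        (Finset.mem_univ i)
    have h3 : (∑ i : Fin d, ∑ x : L, R i x) ≤ T := by rw [hTdef]; omega
    omega
  set β : ℝ := p ^ T with hβdef
  have hβ0 : 0 < β := pow_pos hp0 T
  have hβ1 : β ≤ 1 := pow_le_one₀ (le_of_lt hp0) hp1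
  -- the strategy
  set F : ℕ → L → A := fun n => if n < m then fs n else act (phase hd (n - m)) with hFdef
  have hFlt : ∀ n, n < m → F n = fs n := by intro n hn; rw [hFdef]; simp [hn]
  have hFge : ∀ k, F (m + k) = act (phase hd k) := by
    intro k
    rw [hFdef]
    have h1 : ¬ (m + k < m) := by omega
    simp only [h1, if_false, Nat.add_sub_cancel_left]
  set α : Hist L A → A → ℝ := pureOf F with hαdef
  have hα : IsStrategy α := isStrategy_pureOf F
  set X : ℕ → L → ℝ := outcome μ0 δ α with hXdef
  have hXnn : ∀ n l, 0 ≤ X n l := outcome_nonneg hμ0 hδ hα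
  have hX1 : ∀ n l, X n l ≤ 1 := outcome_le_one hμ0 hδ hα
  have hXsum : ∀ n, ∑ l, X n l = 1 := sum_outcome hμ0 hδ hα
  have hXsucc : ∀ n y, X (n+1) y = ∑ x, X n x * δ x (F n x) y := outcome_pure_succ F
  have hXkstep : ∀ t n y, X (n + t) y = ∑ x, X n x * kstep δ F n t x y :=
    fun t n y => outcome_kstep F t n y
  -- support lemmas
  have supp1 : ∀ n, n ≤ m → ∀ l, l ∉ c n → X n l = 0 := by
    intro n
    induction n with
    | zero =>
      intro _ l hl
      rw [hXdef, outcome_zero]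
      rw [hc0] at hl
      have : ¬ 0 < μ0 l := by
        intro hc
        exact hl (by simp [initCell, hc])
      exact le_antisymm (not_lt.mp this) (hμ0.1 l)
    | succ n ih =>
      intro hn l hl
      rw [hXsucc]
      refine Finset.sum_eq_zero fun x _ => ?_
      by_cases hx : x ∈ c n
      · have hδ0 : δ x (F n x) l = 0 := by
          refine delta_eq_zero_of_not_mem_post hδ ?_
          intro hpost'
          refine hl ?_
          rw [← hcstep n (by omega)]
          rw [← hFlt n (by omega)]
          exact mem_deltaP.mpr ⟨x, hx, hpost'⟩
        rw [hδ0, mul_zero]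
      · rw [ih (by omega) x hx, zero_mul]
  have supp2 : ∀ k l, l ∉ s (phase hd k) → X (m + k) l = 0 := by
    intro k
    induction k with
    | zero =>
      intro l hl
      have hph : phase hd 0 = ⟨0, hd⟩ := by
        apply Fin.ext; simp [phase]
      rw [hph] at hl
      rw [← hcm] at hl
      exact supp1 m le_rfl l hl
    | succ k ih =>
      intro l hl
      rw [← Nat.add_assoc] at *
      rw [hXsucc]
      refine Finset.sum_eq_zero fun x _ => ?_
      by_cases hx : x ∈ s (phase hd k)
      · have hδ0 : δ x (F (m+k) x) l = 0 := by
          refine delta_eq_zero_of_not_mem_post hδ ?_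
          intro hpost'
          refine hl ?_
          rw [phase_succ, ← hcyc]
          rw [hFge k] at hpost'
          exact mem_deltaP.mpr ⟨x, hx, hpost'⟩
        rw [hδ0, mul_zero]
      · rw [ih x hx, zero_mul]
  have hmass : ∀ k, ∑ x ∈ s (phase hd k), X (m + k) x = 1 := by
    intro k
    rw [← hXsum (m + k)]
    symm
    refine (Finset.sum_subset (Finset.subset_univ _) ?_).symm
    intro x _ hx
    exact supp2 k x hx
  -- kstep bounds
  have hdiag : ∀ t k, 1 ≤ kstep δ F (m + k) t (ℓ (phase hd k)) (ℓ (phase hd (k + t))) := by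
    intro t
    induction t with
    | zero => intro k; simp [kstep]
    | succ t ih =>
      intro k
      have h1 : δ (ℓ (phase hd k)) (F (m+k) (ℓ (phase hd k))) (ℓ (phase hd (k+1))) = 1 := by
        rw [hFge k, phase_succ]
        exact hdirac (phase hd k)
      have h2 : 1 ≤ kstep δ F (m + (k+1)) t (ℓ (phase hd (k+1))) (ℓ (phase hd (k+1+t))) := ih (k+1)
      calc (1:ℝ) = δ (ℓ (phase hd k)) (F (m+k) (ℓ (phase hd k))) (ℓ (phase hd (k+1))) * 1 := by
            rw [h1, mul_one]
        _ ≤ δ (ℓ (phase hd k)) (F (m+k) (ℓ (phase hd k))) (ℓ (phase hd (k+1))) *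
              kstep δ F (m+k+1) t (ℓ (phase hd (k+1))) (ℓ (phase hd (k+1+t))) := by
            refine mul_le_mul_of_nonneg_left ?_ (by rw [h1]; norm_num)
            rw [show m + k + 1 = m + (k+1) from by omega]
            exact h2
        _ ≤ kstep δ F (m+k) (t+1) (ℓ (phase hd k)) (ℓ (phase hd (k+1+t))) := by
            refine Finset.single_le_sum (f := fun z => δ (ℓ (phase hd k))
              (F (m+k) (ℓ (phase hd k))) z * kstep δ F (m+k+1) t z (ℓ (phase hd (k+1+t))))
              (fun z _ => mul_nonneg ((hδ _ _).1 z) (kstep_nonneg hδ F t _ z _))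
              (Finset.mem_univ (ℓ (phase hd (k+1))))
        _ = kstep δ F (m+k) (t+1) (ℓ (phase hd k)) (ℓ (phase hd (k+(t+1)))) := by
            rw [show k+1+t = k+(t+1) from by omega]
  have hnrkstep : ∀ (r k : ℕ) (x z : L), nreach hd δ act (phase hd k) x r z →
      p ^ r ≤ kstep δ F (m + k) r x z := by
    intro r
    induction r with
    | zero =>
      intro k x z hnr
      have : z = x := hnr
      subst this
      simp [kstep]
    | succ r ih =>
      intro k x z hnr
      obtain ⟨w, hw, hpost'⟩ := hnr
      have hphw : phase hd ((phase hd k).val + r) = phase hd (k + r) := by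
        apply Fin.ext
        show ((k % d) + r) % d = (k + r) % d
        rw [Nat.mod_add_mod]
      rw [hphw] at hpost'
      have hδp : p ≤ δ w (act (phase hd (k + r)) w) z := hpmin _ _ _ (mem_post.mp hpost')
      have hδF : δ w (act (phase hd (k + r)) w) z = δ w (F (m + k + r) w) z := by
        rw [show m + k + r = m + (k + r) from by omega, hFge]
      calc p ^ (r+1) = p ^ r * p := by ring
        _ ≤ kstep δ F (m + k) r x w * δ w (F (m + k + r) w) z := by
            refine mul_le_mul (ih k x w hw) (by rw [← hδF]; exact hδp) (le_of_lt hp0)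
              (kstep_nonneg hδ F r _ x w)
        _ ≤ kstep δ F (m + k) (r+1) x z := kstep_back hδ F r (m + k) x w z
  have hkT : ∀ (k : ℕ) (x : L), x ∈ s (phase hd k) →
      β ≤ kstep δ F (m + k) T x (ℓ (phase hd (k + T))) := by
    intro k x hx
    set i := phase hd k with hidef
    have hr := hR i x hx
    set r := R i x with hrdef
    have hrT : r ≤ T := hRT i x
    have hph1 : phase hd (i.val + r) = phase hd (k + r) := by
      apply Fin.ext
      show ((k % d) + r) % d = (k + r) % d
      rw [Nat.mod_add_mod]
    rw [hph1] at hr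
    have h1 : p ^ r ≤ kstep δ F (m + k) r x (ℓ (phase hd (k + r))) := hnrkstep r k x _ hr
    have h2 : 1 ≤ kstep δ F (m + k + r) (T - r) (ℓ (phase hd (k + r)))
        (ℓ (phase hd (k + r + (T - r)))) := by
      rw [show m + k + r = m + (k + r) from by omega]
      exact hdiag (T - r) (k + r)
    have h3 : kstep δ F (m + k) r x (ℓ (phase hd (k + r))) *
        kstep δ F (m + k + r) (T - r) (ℓ (phase hd (k + r))) (ℓ (phase hd (k + r + (T - r))))
        ≤ kstep δ F (m + k) (r + (T - r)) x (ℓ (phase hd (k + r + (T - r)))) :=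
      kstep_comp hδ F r (T - r) (m + k) x _ _
    have heq : r + (T - r) = T := by omega
    have heq2 : k + r + (T - r) = k + T := by omega
    rw [heq, heq2] at h3
    rw [heq2] at h2
    calc β = p ^ T := hβdef
      _ ≤ p ^ r := pow_le_pow_of_le_one (le_of_lt hp0) hp1 hrT
      _ = p ^ r * 1 := (mul_one _).symm
      _ ≤ kstep δ F (m + k) r x (ℓ (phase hd (k + r))) *
            kstep δ F (m + k + r) (T - r) (ℓ (phase hd (k + r))) (ℓ (phase hd (k + T))) := by
          refine mul_le_mul h1 h2 (by norm_num) (kstep_nonneg hδ F r _ x _)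
      _ ≤ kstep δ F (m + k) T x (ℓ (phase hd (k + T))) := h3
  -- the concentration sequence
  set u : ℕ → ℝ := fun k => X (m + k) (ℓ (phase hd k)) with hudef
  have hu0 : ∀ k, 0 ≤ u k := fun k => hXnn _ _
  have hu1 : ∀ k, u k ≤ 1 := fun k => hX1 _ _
  have humono : ∀ k, u k ≤ u (k + 1) := by
    intro k
    have : X (m + (k+1)) (ℓ (phase hd (k+1))) = ∑ x, X (m+k) x *
        δ x (F (m+k) x) (ℓ (phase hd (k+1))) := by
      rw [← hXsucc, show m + k + 1 = m + (k+1) from by omega]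
    rw [hudef]
    simp only
    rw [this]
    have h1 : δ (ℓ (phase hd k)) (F (m+k) (ℓ (phase hd k))) (ℓ (phase hd (k+1))) = 1 := by
      rw [hFge k, phase_succ]
      exact hdirac (phase hd k)
    calc X (m+k) (ℓ (phase hd k))
        = X (m+k) (ℓ (phase hd k)) * δ (ℓ (phase hd k)) (F (m+k) (ℓ (phase hd k)))
            (ℓ (phase hd (k+1))) := by rw [h1, mul_one]
      _ ≤ ∑ x, X (m+k) x * δ x (F (m+k) x) (ℓ (phase hd (k+1))) :=
          Finset.single_le_sum (f := fun x => X (m+k) x * δ x (F (m+k) x) (ℓ (phase hd (k+1))))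
            (fun x _ => mul_nonneg (hXnn _ x) ((hδ x _).1 _)) (Finset.mem_univ _)
  have humono' : ∀ k k', k ≤ k' → u k ≤ u k' := by
    intro k k' hk
    induction k' with
    | zero => have : k = 0 := by omega
              subst this; exact le_refl _
    | succ k' ih =>
      rcases Nat.lt_or_ge k (k' + 1) with h | h
      · exact le_trans (ih (by omega)) (humono k')
      · have : k = k' + 1 := by omega
        subst this; exact le_refl _
  have hustep : ∀ k, β + (1 - β) * u k ≤ u (k + T) := by
    intro k
    have hx1 : u (k + T) = ∑ x, X (m+k) x * kstep δ F (m+k) T x (ℓ (phase hd (k + T))) := by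
      rw [hudef]
      simp only
      rw [show m + (k + T) = (m + k) + T from by omega]
      exact hXkstep T (m+k) _
    rw [hx1]
    have hsub : ∑ x ∈ s (phase hd k), X (m+k) x * kstep δ F (m+k) T x (ℓ (phase hd (k + T)))
        ≤ ∑ x, X (m+k) x * kstep δ F (m+k) T x (ℓ (phase hd (k + T))) := by
      refine Finset.sum_le_sum_of_subset_of_nonneg (Finset.subset_univ _) fun x _ _ =>
        mul_nonneg (hXnn _ x) (kstep_nonneg hδ F T _ x _)
    refine le_trans ?_ hsub
    have hterm : ∀ x ∈ s (phase hd k),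
        X (m+k) x * (β + (1 - β) * (if x = ℓ (phase hd k) then 1 else 0))
          ≤ X (m+k) x * kstep δ F (m+k) T x (ℓ (phase hd (k + T))) := by
      intro x hx
      refine mul_le_mul_of_nonneg_left ?_ (hXnn _ x)
      by_cases hxl : x = ℓ (phase hd k)
      · rw [if_pos hxl, mul_one]
        subst hxl
        have := hdiag T k
        linarith
      · rw [if_neg hxl, mul_zero, add_zero]
        exact hkT k x hx
    refine le_trans (le_of_eq ?_) (Finset.sum_le_sum hterm)
    have hexp : ∑ x ∈ s (phase hd k),
        X (m+k) x * (β + (1 - β) * (if x = ℓ (phase hd k) then 1 else 0))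
        = β * (∑ x ∈ s (phase hd k), X (m+k) x)
          + (1 - β) * (∑ x ∈ s (phase hd k), if x = ℓ (phase hd k) then X (m+k) x else 0) := by
      rw [Finset.mul_sum, Finset.mul_sum, ← Finset.sum_add_distrib]
      refine Finset.sum_congr rfl fun x _ => ?_
      split <;> ring
    rw [hexp, hmass k]
    have hl : ∑ x ∈ s (phase hd k), (if x = ℓ (phase hd k) then X (m+k) x else 0)
        = X (m+k) (ℓ (phase hd k)) := by
      rw [Finset.sum_ite_eq' (s (phase hd k)) (ℓ (phase hd k)) (fun x => X (m+k) x)]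
      rw [if_pos (hls (phase hd k))]
    rw [hl]
    rw [hudef]
    ring
  -- u tends to 1
  have hgeo : ∀ j k, j * T ≤ k → 1 - u k ≤ (1 - β) ^ j := by
    intro j
    induction j with
    | zero =>
      intro k _
      have := hu0 k
      simp only [pow_zero]
      linarith
    | succ j ih =>
      intro k hk
      have h1 : 1 - u (j * T) ≤ (1 - β) ^ j := ih (j * T) le_rfl
      have h2 : β + (1 - β) * u (j * T) ≤ u (j * T + T) := hustep (j * T)
      have h3 : u (j * T + T) ≤ u k := humono' _ _ (by rw [Nat.succ_mul] at hk; omega)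
      have h4 : 1 - u k ≤ (1 - β) * (1 - u (j * T)) := by nlinarith
      calc 1 - u k ≤ (1 - β) * (1 - u (j * T)) := h4
        _ ≤ (1 - β) * (1 - β) ^ j := by
            refine mul_le_mul_of_nonneg_left h1 (by linarith)
        _ = (1 - β) ^ (j + 1) := by ring
  have hulim : Filter.Tendsto u Filter.atTop (nhds 1) := by
    rw [Metric.tendsto_atTop]
    intro ε hε
    have hpow : Filter.Tendsto (fun j => (1 - β) ^ j) Filter.atTop (nhds 0) :=
      tendsto_pow_atTop_nhds_zero_of_lt_one (by linarith) (by linarith)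
    obtain ⟨j, hj⟩ := (Metric.tendsto_atTop.mp hpow) ε hε
    refine ⟨j * T, fun k hk => ?_⟩
    have h1 : 1 - u k ≤ (1 - β) ^ j := hgeo j k hk
    have h2 := hj j le_rfl
    rw [Real.dist_eq] at h2 ⊢
    have h3 : |(1-β)^j - 0| = (1-β)^j := by
      rw [sub_zero, abs_of_nonneg (pow_nonneg (by linarith) j)]
    rw [h3] at h2
    have h4 : |u k - 1| = 1 - u k := by
      rw [abs_of_nonpos (by linarith [hu1 k])]
      ring
    rw [h4]
    linarith
  -- conclude
  refine ⟨α, hα, ?_⟩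
  have hdlim : Filter.Tendsto (fun n => dnorm (X n)) Filter.atTop (nhds 1) := by
    have hlow : Filter.Tendsto (fun n => u (n - m)) Filter.atTop (nhds 1) :=
      hulim.comp (tendsto_sub_atTop_nat m)
    refine tendsto_of_tendsto_of_tendsto_of_le_of_le' hlow tendsto_const_nhds ?_ ?_
    · filter_upwards [Filter.eventually_ge_atTop m] with n hn
      have : m + (n - m) = n := by omega
      calc u (n - m) = X n (ℓ (phase hd (n - m))) := by rw [hudef]; simp only; rw [this]
        _ ≤ dnorm (X n) := le_dnorm _ _
    · filter_upwards with n
      exact dnorm_le _ _ (hX1 n)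
  exact hdlim.liminf_eq

end Sufficiency

section Flow
variable {L A : Type} [Fintype L] [DecidableEq L] [Fintype A] [DecidableEq A]

open Classical in
/-- One step of weighted-support propagation. -/
noncomputable def stepSet (μ0 : L → ℝ) (δ : L → A → L → ℝ) (α : Hist L A → A → ℝ)
    (n : ℕ) (S : Finset L) : Finset L :=
  S.biUnion fun y => Finset.univ.filter fun z => ∃ a, 0 < wgt μ0 δ α n y a ∧ 0 < δ y a z

/-- Iterated weighted-support propagation from `x` at time `n`. -/
noncomputable def rset (μ0 : L → ℝ) (δ : L → A → L → ℝ) (α : Hist L A → A → ℝ)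
    (n : ℕ) (x : L) : ℕ → Finset L
  | 0 => {x}
  | k+1 => stepSet μ0 δ α (n + k) (rset μ0 δ α n x k)

variable {μ0 : L → ℝ} {δ : L → A → L → ℝ} {α : Hist L A → A → ℝ}

lemma mem_stepSet {n : ℕ} {S : Finset L} {z : L} :
    z ∈ stepSet μ0 δ α n S ↔ ∃ y ∈ S, ∃ a, 0 < wgt μ0 δ α n y a ∧ 0 < δ y a z := by
  simp [stepSet]

lemma stepSet_biUnion {n : ℕ} {S : Finset L} {F : L → Finset L} :
    stepSet μ0 δ α n (S.biUnion F) = S.biUnion (fun y => stepSet μ0 δ α n (F y)) :=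
  Finset.biUnion_biUnion S F _

lemma rset_zero {n : ℕ} {x : L} : rset μ0 δ α n x 0 = {x} := rfl

lemma rset_succ {n : ℕ} {x : L} {k : ℕ} :
    rset μ0 δ α n x (k+1) = stepSet μ0 δ α (n + k) (rset μ0 δ α n x k) := rfl

lemma rset_shift {n : ℕ} {x : L} :
    ∀ k, rset μ0 δ α n x (k+1)
      = (stepSet μ0 δ α n {x}).biUnion (fun y => rset μ0 δ α (n+1) y k) := by
  intro k
  induction k with
  | zero =>
    rw [rset_succ, rset_zero, Nat.add_zero]
    symm
    apply Finset.biUnion_congr rfl (fun y _ => rfl) |>.trans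
    exact Finset.biUnion_singleton_eq_self
  | succ k ih =>
    rw [rset_succ, ih, stepSet_biUnion]
    refine Finset.biUnion_congr rfl fun y _ => ?_
    rw [rset_succ]
    have : (n + 1) + k = n + (k + 1) := by omega
    rw [this]

variable (hμ0 : IsDist μ0) (hδ : IsTrans δ) (hα : IsStrategy α)
include hμ0 hδ hα

lemma sum_post_delta (y : L) (a : A) : ∑ z ∈ post δ y a, δ y a z = 1 := by
  rw [← (hδ y a).2]
  refine Finset.sum_subset (Finset.subset_univ _) ?_
  intro z _ hz
  exact delta_eq_zero_of_not_mem_post hδ hz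

lemma flow_step (n : ℕ) (S : Finset L) :
    ∑ y ∈ S, outcome μ0 δ α n y ≤ ∑ z ∈ stepSet μ0 δ α n S, outcome μ0 δ α (n+1) z := by
  set T := stepSet μ0 δ α n S with hTdef
  have key : ∀ y ∈ S, ∀ a : A, wgt μ0 δ α n y a ≤ ∑ z ∈ T, wgt μ0 δ α n y a * δ y a z := by
    intro y hy a
    rcases lt_or_ge 0 (wgt μ0 δ α n y a) with hw | hw
    · have hpostT : post δ y a ⊆ T := by
        intro z hz
        rw [hTdef, mem_stepSet]
        exact ⟨y, hy, a, hw, mem_post.mp hz⟩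
      have h1 : (1:ℝ) ≤ ∑ z ∈ T, δ y a z := by
        rw [← sum_post_delta hμ0 hδ hα y a]
        exact Finset.sum_le_sum_of_subset_of_nonneg hpostT fun z _ _ => (hδ y a).1 z
      calc wgt μ0 δ α n y a = wgt μ0 δ α n y a * 1 := (mul_one _).symm
        _ ≤ wgt μ0 δ α n y a * ∑ z ∈ T, δ y a z :=
            mul_le_mul_of_nonneg_left h1 (le_of_lt hw)
        _ = ∑ z ∈ T, wgt μ0 δ α n y a * δ y a z := Finset.mul_sum _ _ _
    · have hw0 : wgt μ0 δ α n y a = 0 := le_antisymm hw (wgt_nonneg hμ0 hδ hα n y a)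
      rw [hw0]
      exact Finset.sum_nonneg fun z _ => by simp
  calc ∑ y ∈ S, outcome μ0 δ α n y
      = ∑ y ∈ S, ∑ a, wgt μ0 δ α n y a := by
        exact Finset.sum_congr rfl fun y _ => (sum_wgt hμ0 hδ hα n y).symm
    _ ≤ ∑ y ∈ S, ∑ a, ∑ z ∈ T, wgt μ0 δ α n y a * δ y a z := by
        refine Finset.sum_le_sum fun y hy => Finset.sum_le_sum fun a _ => key y hy a
    _ = ∑ z ∈ T, ∑ y ∈ S, ∑ a, wgt μ0 δ α n y a * δ y a z := by
        rw [show (∑ y ∈ S, ∑ a : A, ∑ z ∈ T, wgt μ0 δ α n y a * δ y a z)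
            = ∑ y ∈ S, ∑ z ∈ T, ∑ a : A, wgt μ0 δ α n y a * δ y a z from
          Finset.sum_congr rfl fun y _ => Finset.sum_comm]
        exact Finset.sum_comm
    _ ≤ ∑ z ∈ T, ∑ x, ∑ a, wgt μ0 δ α n x a * δ x a z := by
        refine Finset.sum_le_sum fun z _ => ?_
        refine Finset.sum_le_sum_of_subset_of_nonneg (Finset.subset_univ S) fun x _ _ =>
          Finset.sum_nonneg fun a _ =>
            mul_nonneg (wgt_nonneg hμ0 hδ hα n x a) ((hδ x a).1 z)
    _ = ∑ z ∈ T, outcome μ0 δ α (n+1) z :=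
        Finset.sum_congr rfl fun z _ => (outcome_succ_wgt n z).symm

lemma flow (n : ℕ) (x : L) :
    ∀ k, outcome μ0 δ α n x ≤ ∑ z ∈ rset μ0 δ α n x k, outcome μ0 δ α (n + k) z := by
  intro k
  induction k with
  | zero => rw [rset_zero, Finset.sum_singleton, Nat.add_zero]
  | succ k ih =>
    refine le_trans ih ?_
    rw [rset_succ, ← Nat.add_assoc]
    exact flow_step hμ0 hδ hα (n + k) _

end Flow

section Necessity
variable {L A : Type} [Fintype L] [DecidableEq L] [Fintype A] [DecidableEq A]

theorem necessity (μ0 : L → ℝ) (δ : L → A → L → ℝ) (hμ0 : IsDist μ0) (hδ : IsTrans δ)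
    (α : Hist L A → A → ℝ) (hα : IsStrategy α) (hsync : StronglySync μ0 δ α) :
    ∃ (d : ℕ) (hd : 0 < d) (s : Fin d → Finset L) (act : Fin d → L → A),
      (∀ i, (s i).Nonempty) ∧
      (∀ i, deltaP δ (s i) (act i) = s (cyc hd i)) ∧
      ReachP μ0 δ (s ⟨0, hd⟩) ∧
      ∃ g : Fin d → Finset L,
        IsMinRCSP hd δ s act g ∧
        (∀ g', IsMinRCSP hd δ s act g' → g' = g) ∧
        (∀ i, (g i).card = 1) := by
  classical
  haveI hLne : Nonempty L := nonempty_of_isDist hμ0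
  haveI hAne : Nonempty A := by
    by_contra hA
    haveI : IsEmpty A := not_nonempty_iff.mp hA
    have h2 := (hα ⟨Classical.arbitrary L, []⟩).2
    rw [Finset.univ_eq_empty, Finset.sum_empty] at h2
    norm_num at h2
  set X : ℕ → L → ℝ := outcome μ0 δ α with hXdef
  have hXnn : ∀ n l, 0 ≤ X n l := outcome_nonneg hμ0 hδ hα
  have hX1 : ∀ n l, X n l ≤ 1 := outcome_le_one hμ0 hδ hα
  have hXsum : ∀ n, ∑ l, X n l = 1 := sum_outcome hμ0 hδ hα
  -- `dnorm (X n)` tends to 1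
  have hbdd : Filter.IsBoundedUnder (· ≤ ·) Filter.atTop (fun n => dnorm (X n)) :=
    Filter.isBoundedUnder_of ⟨1, fun n => dnorm_le _ _ (hX1 n)⟩
  have hbdd2 : Filter.IsBoundedUnder (· ≥ ·) Filter.atTop (fun n => dnorm (X n)) :=
    Filter.isBoundedUnder_of ⟨0, fun n =>
      le_trans (hXnn n (Classical.arbitrary L)) (le_dnorm _ _)⟩
  have hlimsup : Filter.limsup (fun n => dnorm (X n)) Filter.atTop ≤ 1 :=
    Filter.limsup_le_of_le hbdd2.isCoboundedUnder_le
      (Filter.Eventually.of_forall fun n => dnorm_le _ _ (hX1 n))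
  have hdlim : Filter.Tendsto (fun n => dnorm (X n)) Filter.atTop (nhds 1) :=
    tendsto_of_le_liminf_of_limsup_le (le_of_eq hsync.symm) hlimsup hbdd hbdd2
  -- the maximizers
  set ℓ : ℕ → L := fun n => (dnorm_eq_max (X n)).choose with hℓdef
  have hℓmax : ∀ n, dnorm (X n) = X n (ℓ n) := fun n => (dnorm_eq_max (X n)).choose_spec
  have hℓge : ∀ n y, X n y ≤ X n (ℓ n) := fun n y => (hℓmax n) ▸ le_dnorm (X n) y
  -- thresholds
  obtain ⟨p, hp0, hp1, hpmin⟩ := exists_pmin (δ := δ) hδ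
  set NA : ℕ := Fintype.card A with hNAdef
  have hNA1 : 1 ≤ NA := Fintype.card_pos
  have hNAr : (1:ℝ) ≤ (NA:ℝ) := by exact_mod_cast hNA1
  have hNAr0 : (0:ℝ) < (NA:ℝ) := by linarith
  set ε0 : ℝ := p / (3 * NA) with hε0def
  have hε0pos : 0 < ε0 := div_pos hp0 (by positivity)
  have hε0third : ε0 ≤ 1/3 := by
    rw [hε0def, div_le_iff₀ (by positivity)]
    nlinarith
  have hkey : ε0 < (1 - ε0) / NA * p := by
    have h23 : (2:ℝ)/3 ≤ 1 - ε0 := by linarith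
    rw [hε0def]
    rw [div_lt_iff₀ (by positivity : (0:ℝ) < 3 * NA)]
    have h1 : (1 - ε0) / NA * p * (3 * NA) = 3 * ((1 - ε0) * p) := by
      field_simp
    rw [h1]
    nlinarith
  -- threshold time
  have hev : ∀ᶠ n in Filter.atTop, 1 - ε0 < dnorm (X n) :=
    (tendsto_order.1 hdlim).1 (1 - ε0) (by linarith)
  obtain ⟨N0, hN0⟩ := Filter.eventually_atTop.mp hev
  have hXl : ∀ n, N0 ≤ n → 1 - ε0 < X n (ℓ n) := by
    intro n hn
    rw [← hℓmax n]
    exact hN0 n hn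
  have hsmall : ∀ n, N0 ≤ n → ∀ y, y ≠ ℓ n → X n y < ε0 := by
    intro n hn y hy
    have hpair : X n y + X n (ℓ n) ≤ 1 := by
      calc X n y + X n (ℓ n) = ∑ z ∈ ({y, ℓ n} : Finset L), X n z := by
            rw [Finset.sum_pair hy]
        _ ≤ ∑ z, X n z :=
            Finset.sum_le_sum_of_subset_of_nonneg (Finset.subset_univ _)
              (fun z _ _ => hXnn n z)
        _ = 1 := hXsum n
    have := hXl n hn
    linarith
  -- Dirac actions along the high-probability trail
  have hdirac : ∀ n, N0 ≤ n → ∃ a, (1 - ε0)/NA ≤ wgt μ0 δ α n (ℓ n) a ∧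
      post δ (ℓ n) a = {ℓ (n+1)} := by
    intro n hn
    have hsum : ∑ a, wgt μ0 δ α n (ℓ n) a = X n (ℓ n) := sum_wgt hμ0 hδ hα n (ℓ n)
    have hex : ∃ a, (1 - ε0)/NA ≤ wgt μ0 δ α n (ℓ n) a := by
      by_contra hc
      push_neg at hc
      have hlt : ∑ a, wgt μ0 δ α n (ℓ n) a < ∑ _a : A, (1 - ε0)/NA :=
        Finset.sum_lt_sum_of_nonempty Finset.univ_nonempty fun a _ => hc a
      rw [hsum, Finset.sum_const, Finset.card_univ, ← hNAdef, nsmul_eq_mul] at hlt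
      have heq : (NA:ℝ) * ((1 - ε0)/NA) = 1 - ε0 := by field_simp
      rw [heq] at hlt
      have := hXl n hn
      linarith
    obtain ⟨a, ha⟩ := hex
    refine ⟨a, ha, ?_⟩
    have hwnn : 0 ≤ wgt μ0 δ α n (ℓ n) a := wgt_nonneg hμ0 hδ hα n (ℓ n) a
    have hmem : ∀ y ∈ post δ (ℓ n) a, y = ℓ (n+1) := by
      intro y hy
      by_contra hne
      have h1 : (1 - ε0)/NA * p ≤ X (n+1) y := by
        refine le_trans ?_ (outcome_succ_ge hμ0 hδ hα n (ℓ n) y a)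
        exact mul_le_mul ha (hpmin _ _ _ (mem_post.mp hy)) (le_of_lt hp0) hwnn
      have h2 : X (n+1) y < ε0 := hsmall (n+1) (by omega) y hne
      linarith
    obtain ⟨y0, hy0⟩ := post_nonempty hδ (ℓ n) a
    rw [Finset.eq_singleton_iff_unique_mem]
    exact ⟨(hmem y0 hy0) ▸ hy0, hmem⟩
  set aD : ℕ → A := fun n => if h : N0 ≤ n then (hdirac n h).choose else Classical.arbitrary A
    with haDdef
  have haD : ∀ n, N0 ≤ n → (1 - ε0)/NA ≤ wgt μ0 δ α n (ℓ n) (aD n) ∧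
      post δ (ℓ n) (aD n) = {ℓ (n+1)} := by
    intro n h
    have : aD n = (hdirac n h).choose := by rw [haDdef]; simp [h]
    rw [this]
    exact (hdirac n h).choose_spec
  have haDw : ∀ n, N0 ≤ n → 0 < wgt μ0 δ α n (ℓ n) (aD n) := by
    intro n h
    have h1 := (haD n h).1
    have h2 : 0 < (1 - ε0)/NA := by
      apply div_pos _ hNAr0
      linarith
    linarith
  have haD1 : ∀ n, N0 ≤ n → δ (ℓ n) (aD n) (ℓ (n+1)) = 1 := fun n h =>
    delta_eq_one_of_post_singleton hδ (haD n h).2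
  -- absorption into the trail
  have habs : ∀ n, N0 ≤ n → ∀ x, 0 < X n x → ∃ k, ℓ (n + k) ∈ rset μ0 δ α n x k := by
    intro n _ x hx
    by_contra hc
    push_neg at hc
    have hev2 : ∀ᶠ m in Filter.atTop, 1 - X n x < dnorm (X m) :=
      (tendsto_order.1 hdlim).1 _ (by linarith)
    obtain ⟨M, hM⟩ := Filter.eventually_atTop.mp hev2
    have h1 : X n x ≤ ∑ z ∈ rset μ0 δ α n x M, X (n + M) z := flow hμ0 hδ hα n x M
    have h2 : ∑ z ∈ rset μ0 δ α n x M, X (n + M) z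
        ≤ ∑ z ∈ Finset.univ.erase (ℓ (n + M)), X (n + M) z := by
      refine Finset.sum_le_sum_of_subset_of_nonneg ?_ (fun z _ _ => hXnn _ z)
      intro z hz
      refine Finset.mem_erase.mpr ⟨?_, Finset.mem_univ z⟩
      intro hzeq
      exact hc M (hzeq ▸ hz)
    have h3 : ∑ z ∈ Finset.univ.erase (ℓ (n + M)), X (n + M) z
        = 1 - X (n + M) (ℓ (n + M)) := by
      have h4 := hXsum (n + M)
      rw [← Finset.add_sum_erase Finset.univ _ (Finset.mem_univ (ℓ (n + M)))] at h4
      linarith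
    have h5 := hM (n + M) (by omega)
    rw [hℓmax (n + M)] at h5
    linarith
  -- ranks
  set rk : ℕ → L → ℕ := fun n x =>
    if h : ∃ k, ℓ (n + k) ∈ rset μ0 δ α n x k then Nat.find h else 0 with hrkdef
  have hrk_eq : ∀ n x (h : ∃ k, ℓ (n + k) ∈ rset μ0 δ α n x k), rk n x = Nat.find h := by
    intro n x h
    rw [hrkdef]
    simp [h]
  have hrkl : ∀ n, rk n (ℓ n) = 0 := by
    intro n
    have hm : ℓ (n + 0) ∈ rset μ0 δ α n (ℓ n) 0 := by
      rw [Nat.add_zero, rset_zero]; exact Finset.mem_singleton_self _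
    have hex : ∃ k, ℓ (n + k) ∈ rset μ0 δ α n (ℓ n) k := ⟨0, hm⟩
    rw [hrk_eq n (ℓ n) hex]
    exact Nat.le_zero.mp (Nat.find_le hm)
  -- greedy descent step
  have hdesc : ∀ n, N0 ≤ n → ∀ x, 0 < X n x → x ≠ ℓ n →
      ∃ a, 0 < wgt μ0 δ α n x a ∧
        ∃ y, 0 < δ x a y ∧ 0 < X (n+1) y ∧ rk (n+1) y < rk n x := by
    intro n hn x hx hxl
    have hex := habs n hn x hx
    have hspec1 : ℓ (n + rk n x) ∈ rset μ0 δ α n x (rk n x) := by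
      rw [hrk_eq n x hex]
      exact Nat.find_spec hex
    have hr0 : rk n x ≠ 0 := by
      intro h0
      rw [h0, Nat.add_zero, rset_zero] at hspec1
      exact hxl (Finset.mem_singleton.mp hspec1).symm
    obtain ⟨k0, hk0⟩ : ∃ k0, rk n x = k0 + 1 := ⟨rk n x - 1, by omega⟩
    rw [hk0, rset_shift] at hspec1
    obtain ⟨y, hy, hmem2⟩ := Finset.mem_biUnion.mp hspec1
    rw [mem_stepSet] at hy
    obtain ⟨x', hx', a, hw, hdpos⟩ := hy
    have hxx : x' = x := Finset.mem_singleton.mp hx'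
    subst hxx
    have hXy : 0 < X (n+1) y := outcome_succ_pos hμ0 hδ hα hw hdpos
    refine ⟨a, hw, y, hdpos, hXy, ?_⟩
    have hmem3 : ℓ ((n+1) + k0) ∈ rset μ0 δ α (n+1) y k0 := by
      have harr : n + (k0 + 1) = (n+1) + k0 := by omega
      rw [harr] at hmem2
      exact hmem2
    have hexy : ∃ k, ℓ ((n+1) + k) ∈ rset μ0 δ α (n+1) y k := ⟨k0, hmem3⟩
    have : rk (n+1) y ≤ k0 := by
      rw [hrk_eq (n+1) y hexy]
      exact Nat.find_le hmem3
    omega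
  -- a positive-probability chain from time 0 to the trail at time N0
  have hXN : 0 < X N0 (ℓ N0) := by
    have := hXl N0 le_rfl
    linarith
  have hback : ∀ n y, 0 < X (n+1) y → ∃ x a, 0 < wgt μ0 δ α n x a ∧ 0 < δ x a y := by
    intro n y hy
    have hy2 : (0:ℝ) < ∑ x, ∑ a, wgt μ0 δ α n x a * δ x a y := by
      rw [← outcome_succ_wgt n y]
      exact hy
    have h0 : (∑ _x : L, (0:ℝ)) < ∑ x, ∑ a, wgt μ0 δ α n x a * δ x a y := by
      rw [Finset.sum_const, smul_zero]
      exact hy2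
    obtain ⟨x, -, hx⟩ := Finset.exists_lt_of_sum_lt h0
    have h1 : (∑ _a : A, (0:ℝ)) < ∑ a, wgt μ0 δ α n x a * δ x a y := by
      rw [Finset.sum_const, smul_zero]
      exact hx
    obtain ⟨a, -, ha⟩ := Finset.exists_lt_of_sum_lt h1
    have hw : 0 < wgt μ0 δ α n x a := by
      by_contra hcw
      push_neg at hcw
      have : wgt μ0 δ α n x a = 0 := le_antisymm hcw (wgt_nonneg hμ0 hδ hα n x a)
      rw [this, zero_mul] at ha
      exact lt_irrefl 0 ha
    have hd2 : 0 < δ x a y := by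
      by_contra hcd
      push_neg at hcd
      have : δ x a y = 0 := le_antisymm hcd ((hδ x a).1 y)
      rw [this, mul_zero] at ha
      exact lt_irrefl 0 ha
    exact ⟨x, a, hw, hd2⟩
  have chain : ∀ i, i ≤ N0 → ∃ (ch : ℕ → L) (ca : ℕ → A), ch N0 = ℓ N0 ∧
      0 < X (N0 - i) (ch (N0 - i)) ∧
      ∀ j, N0 - i ≤ j → j < N0 →
        0 < wgt μ0 δ α j (ch j) (ca j) ∧ 0 < δ (ch j) (ca j) (ch (j+1)) := by
    intro i
    induction i with
    | zero =>
      intro _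
      refine ⟨fun _ => ℓ N0, fun _ => Classical.arbitrary A, rfl, ?_, ?_⟩
      · rw [Nat.sub_zero]; exact hXN
      · intro j hj hj'
        rw [Nat.sub_zero] at hj
        exact False.elim (by omega)
    | succ i ih =>
      intro hi
      obtain ⟨ch, ca, hchN, hchpos, hchstep⟩ := ih (by omega)
      have harith : (N0 - (i+1)) + 1 = N0 - i := by omega
      have hXch : 0 < X ((N0 - (i+1)) + 1) (ch (N0 - i)) := by rw [harith]; exact hchpos
      obtain ⟨x, a, hw, hd2⟩ := hback (N0 - (i+1)) (ch (N0 - i)) hXch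
      refine ⟨fun j => if j = N0 - (i+1) then x else ch j,
              fun j => if j = N0 - (i+1) then a else ca j, ?_, ?_, ?_⟩
      · have hne : ¬(N0 = N0 - (i+1)) := by omega
        simp only [if_neg hne]
        exact hchN
      · simp only [if_pos rfl]
        exact lt_of_lt_of_le hw (wgt_le_outcome hμ0 hδ hα _ x a)
      · intro j hj hj'
        by_cases hje : j = N0 - (i+1)
        · have hj1 : ¬(j + 1 = N0 - (i+1)) := by omega
          simp only [if_pos hje, if_neg hj1]
          have hj2 : j + 1 = N0 - i := by omega
          rw [hj2, hje]
          exact ⟨hw, hd2⟩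
        · have hjge : N0 - i ≤ j := by omega
          have hj1 : ¬(j + 1 = N0 - (i+1)) := by omega
          simp only [if_neg hje, if_neg hj1]
          exact hchstep j hjge hj'
  obtain ⟨ch, ca, hchN, hch0, hchstep⟩ := chain N0 le_rfl
  rw [Nat.sub_self] at hch0 hchstep
  -- the selection function
  set f : ℕ → L → A := fun n x =>
    if n < N0 then
      (if x = ch n then ca n
       else if h : ∃ a, 0 < wgt μ0 δ α n x a then h.choose else Classical.arbitrary A)
    else
      (if x = ℓ n then aD n
       else if h : ∃ a, 0 < wgt μ0 δ α n x a ∧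
              ∃ y, 0 < δ x a y ∧ 0 < X (n+1) y ∧ rk (n+1) y < rk n x
            then h.choose
            else if h' : ∃ a, 0 < wgt μ0 δ α n x a then h'.choose
            else Classical.arbitrary A)
    with hfdef
  have hfl : ∀ n, N0 ≤ n → f n (ℓ n) = aD n := by
    intro n hn
    simp only [hfdef]
    rw [if_neg (not_lt.mpr hn)]
    simp
  have hfch : ∀ n, n < N0 → f n (ch n) = ca n := by
    intro n hn
    simp only [hfdef]
    rw [if_pos hn]
    simp
  have hfw : ∀ n x, 0 < X n x → 0 < wgt μ0 δ α n x (f n x) := by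
    intro n x hx
    simp only [hfdef]
    by_cases hn : n < N0
    · rw [if_pos hn]
      by_cases hxc : x = ch n
      · rw [if_pos hxc]
        subst hxc
        exact (hchstep n (Nat.zero_le n) hn).1
      · rw [if_neg hxc]
        have hex : ∃ a, 0 < wgt μ0 δ α n x a := exists_wgt_pos hμ0 hδ hα hx
        rw [dif_pos hex]
        exact hex.choose_spec
    · rw [if_neg hn]
      have hn' : N0 ≤ n := not_lt.mp hn
      by_cases hxl : x = ℓ n
      · rw [if_pos hxl]
        subst hxl
        exact haDw n hn'
      · rw [if_neg hxl]
        by_cases hgood : ∃ a, 0 < wgt μ0 δ α n x a ∧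
            ∃ y, 0 < δ x a y ∧ 0 < X (n+1) y ∧ rk (n+1) y < rk n x
        · rw [dif_pos hgood]
          exact hgood.choose_spec.1
        · rw [dif_neg hgood]
          have hex : ∃ a, 0 < wgt μ0 δ α n x a := exists_wgt_pos hμ0 hδ hα hx
          rw [dif_pos hex]
          exact hex.choose_spec
  have hfdesc : ∀ n, N0 ≤ n → ∀ x, 0 < X n x → x ≠ ℓ n →
      ∃ y, 0 < δ x (f n x) y ∧ 0 < X (n+1) y ∧ rk (n+1) y < rk n x := by
    intro n hn x hx hxl
    have hgood : ∃ a, 0 < wgt μ0 δ α n x a ∧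
        ∃ y, 0 < δ x a y ∧ 0 < X (n+1) y ∧ rk (n+1) y < rk n x := by
      obtain ⟨a, hw, y, h1, h2, h3⟩ := hdesc n hn x hx hxl
      exact ⟨a, hw, y, h1, h2, h3⟩
    have hfx : f n x = hgood.choose := by
      simp only [hfdef]
      rw [if_neg (not_lt.mpr hn), if_neg hxl, dif_pos hgood]
    rw [hfx]
    exact hgood.choose_spec.2
  -- the cells
  set t : ℕ → Finset L := fun n =>
    Nat.rec (initCell μ0) (fun k tk => deltaP δ tk (f k)) n with htdef
  have ht0 : t 0 = initCell μ0 := rfl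
  have htsucc : ∀ n, t (n + 1) = deltaP δ (t n) (f n) := fun n => rfl
  have htreach : ∀ n, ReachP μ0 δ (t n) := by
    intro n
    induction n with
    | zero => exact Relation.ReflTransGen.refl
    | succ n ih => exact Relation.ReflTransGen.tail ih ⟨f n, (htsucc n).symm⟩
  have htsupp : ∀ n x, x ∈ t n → 0 < X n x := by
    intro n
    induction n with
    | zero =>
      intro x hx
      rw [ht0, initCell, Finset.mem_filter] at hx
      have : X 0 x = μ0 x := outcome_zero x
      rw [this]
      exact hx.2
    | succ n ih =>
      intro x hx
      rw [htsucc, mem_deltaP] at hx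
      obtain ⟨x', hx', hpost⟩ := hx
      exact outcome_succ_pos hμ0 hδ hα (hfw n x' (ih x' hx')) (mem_post.mp hpost)
  have htch : ∀ n, n ≤ N0 → ch n ∈ t n := by
    intro n
    induction n with
    | zero =>
      intro _
      rw [ht0, initCell, Finset.mem_filter]
      refine ⟨Finset.mem_univ _, ?_⟩
      have : X 0 (ch 0) = μ0 (ch 0) := outcome_zero (ch 0)
      rw [← this]
      exact hch0
    | succ n ih =>
      intro hn
      rw [htsucc, mem_deltaP]
      refine ⟨ch n, ih (by omega), ?_⟩
      rw [hfch n (by omega), mem_post]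
      exact (hchstep n (Nat.zero_le n) (by omega)).2
  have htl : ∀ n, N0 ≤ n → ℓ n ∈ t n := by
    intro n hn
    induction n with
    | zero =>
      have h0 : N0 = 0 := by omega
      have hNN := htch N0 le_rfl
      rw [hchN, h0] at hNN
      exact hNN
    | succ n ih =>
      by_cases hn' : N0 ≤ n
      · rw [htsucc, mem_deltaP]
        refine ⟨ℓ n, ih hn', ?_⟩
        rw [hfl n hn', (haD n hn').2]
        exact Finset.mem_singleton_self _
      · have h1 : N0 = n + 1 := by omega
        have hNN := htch N0 le_rfl
        rw [hchN, h1] at hNN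
        exact hNN
  -- pigeonhole: a recurring configuration
  have hfiber : ∃ v : Finset L × L, {i : ℕ | (t (N0 + i), ℓ (N0 + i)) = v}.Infinite := by
    obtain ⟨v, hv⟩ :=
      Finite.exists_infinite_fiber (f := fun i : ℕ => (t (N0 + i), ℓ (N0 + i)))
    refine ⟨v, ?_⟩
    rw [← Set.infinite_coe_iff]
    exact hv
  obtain ⟨⟨tstar, lstar⟩, hinf⟩ := hfiber
  obtain ⟨i1, hi1⟩ := hinf.nonempty
  have hi1' : t (N0 + i1) = tstar ∧ ℓ (N0 + i1) = lstar := by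
    have := hi1
    simp only [Set.mem_setOf_eq, Prod.mk.injEq] at this
    exact this
  set m1 : ℕ := N0 + i1 with hm1def
  set Rstar : ℕ := 1 + ∑ x ∈ t m1, rk m1 x with hRstardef
  obtain ⟨i2, hi2mem, hi2gt⟩ := hinf.exists_gt (i1 + Rstar)
  have hi2' : t (N0 + i2) = tstar ∧ ℓ (N0 + i2) = lstar := by
    have := hi2mem
    simp only [Set.mem_setOf_eq, Prod.mk.injEq] at this
    exact this
  set m2 : ℕ := N0 + i2 with hm2def
  have hm1N : N0 ≤ m1 := Nat.le_add_right _ _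
  have hm2N : N0 ≤ m2 := Nat.le_add_right _ _
  have hm1m2 : m1 + Rstar < m2 := by omega
  have htm : t m2 = t m1 := by rw [hi2'.1, hi1'.1]
  have hlm : ℓ m2 = ℓ m1 := by rw [hi2'.2, hi1'.2]
  have hrkbound : ∀ x ∈ t m1, rk m1 x < Rstar := by
    intro x hx
    have h1 : rk m1 x ≤ ∑ x ∈ t m1, rk m1 x :=
      Finset.single_le_sum (f := fun x => rk m1 x) (fun _ _ => Nat.zero_le _) hx
    omega
  set d : ℕ := m2 - m1 with hddef
  have hd : 0 < d := by omega
  have hdR : Rstar ≤ d := by omega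
  -- helper facts
  have hm2eq : m1 + d = m2 := by omega
  have hrk0 : ∀ n x, N0 ≤ n → 0 < X n x → rk n x = 0 → x = ℓ n := by
    intro n x hn hX h0
    have hex := habs n hn x hX
    have hfind : ℓ (n + rk n x) ∈ rset μ0 δ α n x (rk n x) := by
      rw [hrk_eq _ _ hex]
      exact Nat.find_spec hex
    rw [h0, Nat.add_zero, rset_zero] at hfind
    exact (Finset.mem_singleton.mp hfind).symm
  -- the cycle data
  set s' : Fin d → Finset L := fun j => t (m1 + j.val) with hs'def
  set act' : Fin d → L → A := fun j => f (m1 + j.val) with hact'def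
  set g' : Fin d → Finset L := fun j => {ℓ (m1 + j.val)} with hg'def
  have hcycle : ∀ j : Fin d, deltaP δ (s' j) (act' j) = s' (cyc hd j) := by
    intro j
    simp only [hs'def, hact'def]
    rw [← htsucc (m1 + j.val)]
    by_cases hj : j.val + 1 < d
    · have hcv : (cyc hd j).val = j.val + 1 := Nat.mod_eq_of_lt hj
      rw [hcv, ← Nat.add_assoc]
    · have hj1 : j.val + 1 = d := by have := j.isLt; omega
      have hcv : (cyc hd j).val = 0 := by
        show (j.val + 1) % d = 0
        rw [hj1, Nat.mod_self]
      rw [hcv, Nat.add_zero, show m1 + j.val + 1 = m2 from by omega]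
      exact htm
  have hm1jN : ∀ j : Fin d, N0 ≤ m1 + j.val := fun j => by omega
  have hne' : ∀ j : Fin d, (s' j).Nonempty := by
    intro j
    exact ⟨ℓ (m1 + j.val), htl (m1 + j.val) (hm1jN j)⟩
  have hreach' : ReachP μ0 δ (s' ⟨0, hd⟩) := by
    simp only [hs'def]
    rw [Nat.add_zero]
    exact htreach m1
  -- g' is an RCS
  have hgRCS : IsRCSP hd δ s' act' g' := by
    intro j
    refine ⟨Finset.singleton_nonempty _, ?_, ?_⟩
    · intro z hz
      rw [hg'def, Finset.mem_singleton] at hz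
      subst hz
      exact htl (m1 + j.val) (hm1jN j)
    · simp only [hg'def]
      rw [Finset.singleton_biUnion]
      have hact : act' j (ℓ (m1 + j.val)) = aD (m1 + j.val) := by
        simp only [hact'def]
        exact hfl (m1 + j.val) (hm1jN j)
      rw [hact, (haD (m1 + j.val) (hm1jN j)).2]
      by_cases hj : j.val + 1 < d
      · have hcv : (cyc hd j).val = j.val + 1 := Nat.mod_eq_of_lt hj
        rw [hcv, ← Nat.add_assoc]
      · have hj1 : j.val + 1 = d := by have := j.isLt; omega
        have hcv : (cyc hd j).val = 0 := by
          show (j.val + 1) % d = 0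
          rw [hj1, Nat.mod_self]
        rw [hcv, Nat.add_zero, show m1 + j.val + 1 = m2 from by omega]
        rw [hlm]
  have hgmin' : ∀ g2, IsRCSP hd δ s' act' g2 → (∀ i, g2 i ⊆ g' i) → g2 = g' := by
    intro g2 hg2 hsub
    funext j
    exact (Finset.Nonempty.subset_singleton_iff (hg2 j).1).mp (hsub j)
  -- uniqueness of the minimal RCS
  have huniq' : ∀ gm, IsMinRCSP hd δ s' act' gm → gm = g' := by
    intro gm hgm
    obtain ⟨hgmRCS, hgmmin⟩ := hgm
    -- Step A: descent to the trail
    have descent : ∀ r (i : ℕ) (x : L), i < d → x ∈ gm (phase hd i) → 0 < X (m1 + i) x →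
        rk (m1 + i) x ≤ r → i + r ≤ d → ∃ pf : Fin d, ℓ (m1 + pf.val) ∈ gm pf := by
      intro r
      induction r with
      | zero =>
        intro i x hid hxg hXx hrk hisum
        have hx : x = ℓ (m1 + i) :=
          hrk0 (m1 + i) x (by omega) hXx (Nat.le_zero.mp hrk)
        refine ⟨phase hd i, ?_⟩
        have hpv : (phase hd i).val = i := Nat.mod_eq_of_lt hid
        rw [hpv, ← hx]
        exact hxg
      | succ r ih =>
        intro i x hid hxg hXx hrk hisum
        by_cases hxl : x = ℓ (m1 + i)
        · refine ⟨phase hd i, ?_⟩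
          have hpv : (phase hd i).val = i := Nat.mod_eq_of_lt hid
          rw [hpv, ← hxl]
          exact hxg
        · obtain ⟨y, hdy, hXy, hrky⟩ := hfdesc (m1 + i) (by omega) x hXx hxl
          have hpv : (phase hd i).val = i := Nat.mod_eq_of_lt hid
          have hygm : y ∈ gm (cyc hd (phase hd i)) := by
            rw [← (hgmRCS (phase hd i)).2.2]
            refine Finset.mem_biUnion.mpr ⟨x, hxg, ?_⟩
            rw [mem_post]
            have hact : act' (phase hd i) x = f (m1 + i) x := by
              simp only [hact'def]
              rw [hpv]
            rw [hact]
            exact hdy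
          have hXy' : 0 < X (m1 + (i + 1)) y := by
            rw [show m1 + (i+1) = m1 + i + 1 from by omega]
            exact hXy
          by_cases hi1 : i + 1 < d
          · refine ih (i + 1) y hi1 ?_ hXy' ?_ (by omega)
            · rw [← phase_succ] at hygm
              exact hygm
            · have : rk (m1 + (i+1)) y < rk (m1 + i) x := by
                rw [show m1 + (i+1) = m1 + i + 1 from by omega]
                exact hrky
              omega
          · -- wrap: i + 1 = d, forcing r = 0 and rank 0 at m2
            have hi1d : i + 1 = d := by have := hid; omega
            have hr0 : r = 0 := by omega
            have hrkm2 : rk (m1 + i + 1) y = 0 := by omega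
            have hyeq : y = ℓ (m1 + i + 1) :=
              hrk0 (m1 + i + 1) y (by omega) hXy hrkm2
            refine ⟨⟨0, hd⟩, ?_⟩
            have hcv : cyc hd (phase hd i) = ⟨0, hd⟩ := by
              apply Fin.ext
              show ((phase hd i).val + 1) % d = 0
              rw [hpv, hi1d, Nat.mod_self]
            rw [hcv] at hygm
            have hlval : ℓ (m1 + (0:ℕ)) = y := by
              rw [Nat.add_zero, ← hlm, show m2 = m1 + i + 1 from by omega, ← hyeq]
            rw [show ((⟨0, hd⟩ : Fin d) : ℕ) = 0 from rfl, hlval]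
            exact hygm
    -- start the descent from an element of `gm 0`
    obtain ⟨x0, hx0⟩ := (hgmRCS ⟨0, hd⟩).1
    have hx0t : x0 ∈ t m1 := by
      have h1 := (hgmRCS ⟨0, hd⟩).2.1 hx0
      simp only [hs'def] at h1
      rw [Nat.add_zero] at h1
      exact h1
    have hx0X : 0 < X (m1 + 0) x0 := by
      rw [Nat.add_zero]
      exact htsupp m1 x0 hx0t
    have hx0g : x0 ∈ gm (phase hd 0) := by
      have : phase hd 0 = ⟨0, hd⟩ := by
        apply Fin.ext
        show 0 % d = 0
        exact Nat.zero_mod d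
      rw [this]
      exact hx0
    have hx0rk : rk (m1 + 0) x0 ≤ rk m1 x0 := by rw [Nat.add_zero]
    obtain ⟨pf, hpf⟩ := descent (rk m1 x0) 0 x0 hd hx0g hx0X hx0rk
      (by have := hrkbound x0 hx0t; omega)
    -- Step B: propagate around the cycle
    have propagate : ∀ k, ℓ (m1 + (phase hd (pf.val + k)).val) ∈ gm (phase hd (pf.val + k)) := by
      intro k
      induction k with
      | zero => rw [Nat.add_zero, phase_fin]; exact hpf
      | succ k ih =>
        set q := phase hd (pf.val + k) with hqdef
        have h1 : ℓ (m1 + q.val + 1) ∈ gm (cyc hd q) := by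
          rw [← (hgmRCS q).2.2]
          refine Finset.mem_biUnion.mpr ⟨ℓ (m1 + q.val), ih, ?_⟩
          have hact : act' q (ℓ (m1 + q.val)) = aD (m1 + q.val) := by
            simp only [hact'def]
            exact hfl (m1 + q.val) (by omega)
          rw [hact, (haD (m1 + q.val) (by omega)).2]
          exact Finset.mem_singleton_self _
        have h2 : phase hd (pf.val + (k + 1)) = cyc hd q := by
          rw [← Nat.add_assoc, phase_succ, ← hqdef]
        rw [h2]
        by_cases hqd : q.val + 1 < d
        · have hcv : (cyc hd q).val = q.val + 1 := Nat.mod_eq_of_lt hqd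
          rw [show m1 + (cyc hd q).val = m1 + q.val + 1 from by omega]
          exact h1
        · have hq1 : q.val + 1 = d := by have := q.isLt; omega
          have hcv : (cyc hd q).val = 0 := by
            show (q.val + 1) % d = 0
            rw [hq1, Nat.mod_self]
          rw [hcv, Nat.add_zero]
          have hll : ℓ (m1 + q.val + 1) = ℓ m1 := by
            rw [show m1 + q.val + 1 = m2 from by omega]
            exact hlm
          rw [← hll]
          exact h1
    have hsub : ∀ j, g' j ⊆ gm j := by
      intro j z hz
      rw [hg'def, Finset.mem_singleton] at hz
      subst hz
      obtain ⟨k, hk⟩ := phase_surj hd pf j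
      have hp := propagate k
      rw [hk] at hp
      exact hp
    exact (hgmmin g' hgRCS hsub).symm
  refine ⟨d, hd, s', act', hne', hcycle, hreach', g', ⟨hgRCS, hgmin'⟩, huniq', ?_⟩
  intro j
  rw [hg'def]
  exact Finset.card_singleton _




end Necessity

/-- An MDP has a (perfect-information) strongly synchronizing strategy
iff its perfect-information subset construction has an accessible cycle with exactly one
minimal recurrent cyclic set, all of whose elements are singletons. -/
theorem strongly_sync_iff_perfect
    (μ0 : L → ℝ) (δ : L → A → L → ℝ)
    (hμ0 : IsDist μ0) (hδ : IsTrans δ) :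
    (∃ α : Hist L A → A → ℝ, IsStrategy α ∧ StronglySync μ0 δ α) ↔
    (∃ (d : ℕ) (hd : 0 < d) (s : Fin d → Finset L) (act : Fin d → L → A),
      (∀ i, (s i).Nonempty) ∧
      (∀ i, deltaP δ (s i) (act i) = s (cyc hd i)) ∧
      ReachP μ0 δ (s ⟨0, hd⟩) ∧
      ∃ g : Fin d → Finset L,
        IsMinRCSP hd δ s act g ∧
        (∀ g', IsMinRCSP hd δ s act g' → g' = g) ∧
        (∀ i, (g i).card = 1)) := by
  constructor
  · rintro ⟨α, hα, hsync⟩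
    exact necessity μ0 δ hμ0 hδ α hα hsync
  · rintro ⟨d, hd, s, act, hne, hcyc, hreach, g, hg, huniq, hcard⟩
    exact sufficiency hμ0 hδ hd s act hcyc hreach g hg huniq hcard

end SyncMDP
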